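/- Let n ≥ 4 and p, q ≥ 1 be integers, let X₁,…,X_n ∈ ℝᵖ and Y₁,…,Y_n ∈ ℝ^q, and let τ_X > 0, τ_Y > 0, τ = τ_X·τ_Y. Let L_X be the symmetric n×n matrix with zero diagonal and off-diagonal entries (‖X_s−X_t‖² − τ_X²)/τ_X², and let L_Y be the symmetric n×n matrix with zero diagonal and off-diagonal entries (‖Y_s−Y_t‖² − τ_Y²)/τ_Y², where ‖·‖ is the Euclidean norm. Writing x_{si} for the i-th coordinate of X_s and y_{sj} for the j-th coordinate of Y_s, one has (1/4)·(L̃_X·L̃_Y) = (1/τ²)·Σ_{i=1}^p Σ_{j=1}^q cov_n²((x_{1i},…,x_{ni}), (y_{1j},…,y_{nj})). -/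

import Mathlib

open Finset Matrix Equiv

/-- The `𝒰`-centered version `Ã` of an `n × n` real matrix `A`:
`ã_{st} = a_{st} − (1/(n−2))·Σ_v a_{sv} − (1/(n−2))·Σ_u a_{ut}
          + (1/((n−1)(n−2)))·Σ_{u,v} a_{uv}` for `s ≠ t`, and `ã_{ss} = 0`. -/
noncomputable def uCenter {n : ℕ} (A : Matrix (Fin n) (Fin n) ℝ) :
    Matrix (Fin n) (Fin n) ℝ := fun s t =>
  if s = t then 0 else
    A s t - (∑ v, A s v) / ((n : ℝ) - 2) - (∑ u, A u t) / ((n : ℝ) - 2)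
      + (∑ u, ∑ v, A u v) / (((n : ℝ) - 1) * ((n : ℝ) - 2))


/-- The inner product of the `𝒰`-centered versions of two `n × n` matrices:
`(Ã·B̃) := (1/(n(n−3)))·Σ_{s≠t} ã_{st}·b̃_{st}`. -/
noncomputable def uInner {n : ℕ} (A B : Matrix (Fin n) (Fin n) ℝ) : ℝ :=
  (∑ s, ∑ t, if s ≠ t then uCenter A s t * uCenter B s t else 0)
    / ((n : ℝ) * ((n : ℝ) - 3))

/-- The symmetrized kernel `h` of the fourth-order `𝒰`-statistic `cov_n²`: the average over
all `4!` permutations `(s′,t′,u′,v′)` of `(s,t,u,v)` of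
`(1/4)·(x_{s′}−x_{t′})(y_{s′}−y_{t′})(x_{u′}−x_{v′})(y_{u′}−y_{v′})`. -/
noncomputable def hKernel {n : ℕ} (x y : Fin n → ℝ) (s t u v : Fin n) : ℝ :=
  (1 / (Nat.factorial 4 : ℝ)) * ∑ σ : Equiv.Perm (Fin 4),
    (1 / 4 : ℝ) * (x (![s, t, u, v] (σ 0)) - x (![s, t, u, v] (σ 1)))
      * (y (![s, t, u, v] (σ 0)) - y (![s, t, u, v] (σ 1)))
      * (x (![s, t, u, v] (σ 2)) - x (![s, t, u, v] (σ 3)))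
      * (y (![s, t, u, v] (σ 2)) - y (![s, t, u, v] (σ 3)))

/-- The fourth-order `𝒰`-statistic `cov_n²(x,y) = (1/C(n,4))·Σ_{s<t<u<v} h(s,t,u,v)`,
an unbiased estimator of the squared covariance. -/
noncomputable def covnSq {n : ℕ} (x y : Fin n → ℝ) : ℝ :=
  (∑ s, ∑ t, ∑ u, ∑ v,
    if s < t ∧ t < u ∧ u < v then hKernel x y s t u v else 0) / (n.choose 4 : ℝ)

theorem dc_expand_sum {n : ℕ} (x y : Fin n → ℝ) (F : Fin n → ℝ)
    (c0 cx cy cxx cyy cxy cxxy cxyy cxxyy : ℝ)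
    (hF : ∀ t, F t = c0 + cx * x t + cy * y t + cxx * (x t)^2 + cyy * (y t)^2
      + cxy * (x t * y t) + cxxy * ((x t)^2 * y t) + cxyy * (x t * (y t)^2)
      + cxxyy * ((x t)^2 * (y t)^2)) :
    ∑ t, F t = c0 * ((n:ℝ)) + cx * (∑ i, x i) + cy * (∑ i, y i) + cxx * (∑ i, (x i)^2)
      + cyy * (∑ i, (y i)^2) + cxy * (∑ i, x i * y i) + cxxy * (∑ i, (x i)^2 * y i)
      + cxyy * (∑ i, x i * (y i)^2) + cxxyy * (∑ i, (x i)^2 * (y i)^2) := by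
  rw [Finset.sum_congr rfl (fun t _ => hF t)]
  simp [Finset.sum_add_distrib, ← Finset.mul_sum, Finset.card_univ, mul_comm]

theorem dc_sum_offdiag {n : ℕ} (Z : Fin n → Fin n → ℝ) :
    (∑ s, ∑ t, if s ≠ t then Z s t else 0) = (∑ s, ∑ t, Z s t) - ∑ s, Z s s := by
  have h : ∀ s t : Fin n, (if s ≠ t then Z s t else 0) = Z s t - (if t = s then Z s t else 0) := by
    intro s t
    by_cases h : s = t
    · subst h; simp
    · rw [if_pos h, if_neg (Ne.symm h)]; ring
  rw [Finset.sum_congr rfl (fun s _ => Finset.sum_congr rfl fun t _ => h s t)]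
  rw [← Finset.sum_sub_distrib]
  congr 1
  ext s
  rw [Finset.sum_sub_distrib, Finset.sum_ite_eq' Finset.univ s (fun t => Z s t)]
  simp

theorem dc_choose4 (n : ℕ) (hn : 4 ≤ n) :
    (n.choose 4 : ℝ) = (n:ℝ) * ((n:ℝ)-1) * ((n:ℝ)-2) * ((n:ℝ)-3) / 24 := by
  have h : n * (n-1) * (n-2) * (n-3) = 24 * n.choose 4 := by
    have h1 := Nat.descFactorial_eq_factorial_mul_choose n 4
    have h2 : n.descFactorial 4 = n * (n-1) * (n-2) * (n-3) := by
      simp [Nat.descFactorial]; ring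
    rw [← h2, h1]; rfl
  have hc : ((n * (n-1) * (n-2) * (n-3) : ℕ) : ℝ) = ((24 * n.choose 4 : ℕ) : ℝ) := by rw [h]
  push_cast [Nat.cast_sub (show 1 ≤ n by omega), Nat.cast_sub (show 2 ≤ n by omega),
    Nat.cast_sub (show 3 ≤ n by omega)] at hc
  rw [eq_div_iff (by norm_num)]
  linarith [hc]

theorem dc_pair_split {n : ℕ} (P : Fin n → Fin n → Prop) [∀ a b, Decidable (P a b)]
    (g : Fin n → Fin n → ℝ) (hsym : ∀ a b, P a b → P b a) (hirr : ∀ a, ¬ P a a)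
    (hg : ∀ a b, g a b = g b a) :
    (∑ a, ∑ b, if P a b then g a b else 0)
      = 2 * ∑ a, ∑ b, if P a b ∧ a < b then g a b else 0 := by
  have hpt : ∀ a b, (if P a b then g a b else 0)
      = (if P a b ∧ a < b then g a b else 0) + (if P a b ∧ b < a then g a b else 0) := by
    intro a b
    by_cases hP : P a b
    · rcases lt_trichotomy a b with h | h | h
      · rw [if_pos hP, if_pos ⟨hP, h⟩, if_neg (fun hc => absurd hc.2 (asymm h))]; ring
      · exact absurd hP (h ▸ hirr a)
      · rw [if_pos hP, if_neg (fun hc => absurd hc.2 (asymm h)), if_pos ⟨hP, h⟩]; ring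
    · rw [if_neg hP, if_neg (fun hc => hP hc.1), if_neg (fun hc => hP hc.1)]; ring
  rw [Finset.sum_congr rfl (fun a _ => Finset.sum_congr rfl fun b _ => hpt a b)]
  have hsplit : (∑ a, ∑ b, ((if P a b ∧ a < b then g a b else 0) + (if P a b ∧ b < a then g a b else 0)))
      = (∑ a, ∑ b, if P a b ∧ a < b then g a b else 0)
        + (∑ a, ∑ b, if P a b ∧ b < a then g a b else 0) := by
    simp [Finset.sum_add_distrib]
  rw [hsplit]
  have hsecond : (∑ a, ∑ b, if P a b ∧ b < a then g a b else 0)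
      = ∑ a, ∑ b, if P a b ∧ a < b then g a b else 0 := by
    rw [Finset.sum_comm]
    exact Finset.sum_congr rfl fun a _ => Finset.sum_congr rfl fun b _ => by
      by_cases h : P b a ∧ a < b
      · rw [if_pos h, if_pos ⟨hsym b a h.1, h.2⟩, hg b a]
      · rw [if_neg h, if_neg (fun hc => h ⟨hsym a b hc.1, hc.2⟩)]
  rw [hsecond]; ring

theorem dc_sw23 {α β γ δ : Type*} [Fintype α] [Fintype β] [Fintype γ] [Fintype δ]
    {M : Type*} [AddCommMonoid M] (G : α → β → γ → δ → M) :
    (∑ s, ∑ t, ∑ u, ∑ v, G s t u v) = ∑ s, ∑ u, ∑ t, ∑ v, G s t u v :=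
  Finset.sum_congr rfl fun _ _ => Finset.sum_comm

theorem dc_sw12 {α β γ δ : Type*} [Fintype α] [Fintype β] [Fintype γ] [Fintype δ]
    {M : Type*} [AddCommMonoid M] (G : α → β → γ → δ → M) :
    (∑ s, ∑ t, ∑ u, ∑ v, G s t u v) = ∑ t, ∑ s, ∑ u, ∑ v, G s t u v :=
  Finset.sum_comm

theorem dc_sw34 {α β γ δ : Type*} [Fintype α] [Fintype β] [Fintype γ] [Fintype δ]
    {M : Type*} [AddCommMonoid M] (G : α → β → γ → δ → M) :
    (∑ s, ∑ t, ∑ u, ∑ v, G s t u v) = ∑ s, ∑ t, ∑ v, ∑ u, G s t u v :=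
  Finset.sum_congr rfl fun _ _ => Finset.sum_congr rfl fun _ _ => Finset.sum_comm

theorem dc_swap23 {n : ℕ} (G : Fin n → Fin n → Fin n → Fin n → ℝ) :
    (∑ s, ∑ t, ∑ u, ∑ v, G s t u v) = ∑ s, ∑ t, ∑ u, ∑ v, G s u t v := dc_sw23 G

theorem dc_swap34 {n : ℕ} (G : Fin n → Fin n → Fin n → Fin n → ℝ) :
    (∑ s, ∑ t, ∑ u, ∑ v, G s t u v) = ∑ s, ∑ t, ∑ u, ∑ v, G s t v u := dc_sw34 G

theorem dc_pairswap {α β γ δ : Type*} [Fintype α] [Fintype β] [Fintype γ] [Fintype δ]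
    {M : Type*} [AddCommMonoid M] (G : α → β → γ → δ → M) :
    (∑ s, ∑ t, ∑ u, ∑ v, G s t u v) = ∑ u, ∑ v, ∑ s, ∑ t, G s t u v := by
  rw [dc_sw23, dc_sw12, dc_sw34, dc_sw23]

theorem dc_pairswap' {n : ℕ} (G : Fin n → Fin n → Fin n → Fin n → ℝ) :
    (∑ s, ∑ t, ∑ u, ∑ v, G s t u v) = ∑ s, ∑ t, ∑ u, ∑ v, G u v s t := dc_pairswap G

theorem dc_cycle {n : ℕ} (G : Fin n → Fin n → Fin n → Fin n → ℝ) :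
    (∑ s, ∑ t, ∑ u, ∑ v, G s t u v) = ∑ s, ∑ t, ∑ u, ∑ v, G s v t u :=
  (dc_swap23 G).trans (dc_swap34 (fun a b c d => G a c b d))

theorem dc_congr4 {n : ℕ} (F G : Fin n → Fin n → Fin n → Fin n → ℝ)
    (h : ∀ s t u v, F s t u v = G s t u v) :
    (∑ s, ∑ t, ∑ u, ∑ v, F s t u v) = ∑ s, ∑ t, ∑ u, ∑ v, G s t u v :=
  Finset.sum_congr rfl fun s _ => Finset.sum_congr rfl fun t _ =>
    Finset.sum_congr rfl fun u _ => Finset.sum_congr rfl fun v _ => h s t u v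

theorem dc_add4 {n : ℕ} (F G : Fin n → Fin n → Fin n → Fin n → ℝ) :
    (∑ s, ∑ t, ∑ u, ∑ v, (F s t u v + G s t u v))
      = (∑ s, ∑ t, ∑ u, ∑ v, F s t u v) + ∑ s, ∑ t, ∑ u, ∑ v, G s t u v := by
  simp [Finset.sum_add_distrib]

theorem dc_sym24 {n : ℕ} (k : Fin n → Fin n → Fin n → Fin n → ℝ)
    (h12 : ∀ s t u v, k s t u v = k t s u v)
    (h23 : ∀ s t u v, k s t u v = k s u t v)
    (h34 : ∀ s t u v, k s t u v = k s t v u) :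
    (∑ s, ∑ t, ∑ u, ∑ v,
        if s ≠ t ∧ s ≠ u ∧ s ≠ v ∧ t ≠ u ∧ t ≠ v ∧ u ≠ v then k s t u v else 0)
      = 24 * ∑ s, ∑ t, ∑ u, ∑ v, if s < t ∧ t < u ∧ u < v then k s t u v else 0 := by
  have kswap : ∀ s t u v, k s t u v = k u v s t := by
    intro s t u v
    calc k s t u v = k s u t v := h23 s t u v
      _ = k u s t v := h12 s u t v
      _ = k u s v t := h34 u s t v
      _ = k u v s t := h23 u s v t
  have kcyc : ∀ a b c d, k a d b c = k a b c d := fun a b c d =>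
    (h23 a d b c).trans (h34 a b d c)
  -- Step 1: order the inner pair (u, v)
  have s1 : (∑ s, ∑ t, ∑ u, ∑ v,
        if s ≠ t ∧ s ≠ u ∧ s ≠ v ∧ t ≠ u ∧ t ≠ v ∧ u ≠ v then k s t u v else 0)
      = 2 * ∑ s, ∑ t, ∑ u, ∑ v,
        if (s ≠ t ∧ s ≠ u ∧ s ≠ v ∧ t ≠ u ∧ t ≠ v ∧ u ≠ v) ∧ u < v then k s t u v else 0 := by
    have h : ∀ s t : Fin n, (∑ u, ∑ v,
        if s ≠ t ∧ s ≠ u ∧ s ≠ v ∧ t ≠ u ∧ t ≠ v ∧ u ≠ v then k s t u v else 0)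
        = 2 * ∑ u, ∑ v,
        if (s ≠ t ∧ s ≠ u ∧ s ≠ v ∧ t ≠ u ∧ t ≠ v ∧ u ≠ v) ∧ u < v then k s t u v else 0 :=
      fun s t => dc_pair_split
        (fun u v => s ≠ t ∧ s ≠ u ∧ s ≠ v ∧ t ≠ u ∧ t ≠ v ∧ u ≠ v)
        (fun u v => k s t u v) (fun u v hp => by omega) (fun u hp => by omega)
        (fun u v => h34 s t u v)
    rw [Finset.sum_congr rfl (fun s _ => Finset.sum_congr rfl fun t _ => h s t)]
    simp [Finset.mul_sum]
  -- Step 2: order the pair (s, t)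
  have s2 : (∑ s, ∑ t, ∑ u, ∑ v,
        if (s ≠ t ∧ s ≠ u ∧ s ≠ v ∧ t ≠ u ∧ t ≠ v ∧ u ≠ v) ∧ u < v then k s t u v else 0)
      = 2 * ∑ s, ∑ t, ∑ u, ∑ v,
        if ((s ≠ t ∧ s ≠ u ∧ s ≠ v ∧ t ≠ u ∧ t ≠ v ∧ u ≠ v) ∧ u < v) ∧ s < t
          then k s t u v else 0 := by
    rw [dc_pairswap' (fun s t u v =>
      if (s ≠ t ∧ s ≠ u ∧ s ≠ v ∧ t ≠ u ∧ t ≠ v ∧ u ≠ v) ∧ u < v then k s t u v else 0)]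
    conv_rhs => rw [dc_pairswap' (fun s t u v =>
      if ((s ≠ t ∧ s ≠ u ∧ s ≠ v ∧ t ≠ u ∧ t ≠ v ∧ u ≠ v) ∧ u < v) ∧ s < t
        then k s t u v else 0)]
    have h : ∀ s t : Fin n, (∑ u, ∑ v,
        if (u ≠ v ∧ u ≠ s ∧ u ≠ t ∧ v ≠ s ∧ v ≠ t ∧ s ≠ t) ∧ s < t then k u v s t else 0)
        = 2 * ∑ u, ∑ v,
        if ((u ≠ v ∧ u ≠ s ∧ u ≠ t ∧ v ≠ s ∧ v ≠ t ∧ s ≠ t) ∧ s < t) ∧ u < v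
          then k u v s t else 0 :=
      fun s t => dc_pair_split
        (fun u v => (u ≠ v ∧ u ≠ s ∧ u ≠ t ∧ v ≠ s ∧ v ≠ t ∧ s ≠ t) ∧ s < t)
        (fun u v => k u v s t) (fun u v hp => by omega) (fun u hp => by omega)
        (fun u v => h12 u v s t)
    rw [Finset.sum_congr rfl (fun s _ => Finset.sum_congr rfl fun t _ => h s t)]
    simp [Finset.mul_sum]
  -- Step 3: order s < u
  have s3 : (∑ s, ∑ t, ∑ u, ∑ v,
        if ((s ≠ t ∧ s ≠ u ∧ s ≠ v ∧ t ≠ u ∧ t ≠ v ∧ u ≠ v) ∧ u < v) ∧ s < t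
          then k s t u v else 0)
      = 2 * ∑ s, ∑ t, ∑ u, ∑ v,
        if (((s ≠ t ∧ s ≠ u ∧ s ≠ v ∧ t ≠ u ∧ t ≠ v ∧ u ≠ v) ∧ u < v) ∧ s < t) ∧ s < u
          then k s t u v else 0 := by
    have hpt : ∀ s t u v : Fin n,
        (if ((s ≠ t ∧ s ≠ u ∧ s ≠ v ∧ t ≠ u ∧ t ≠ v ∧ u ≠ v) ∧ u < v) ∧ s < t
          then k s t u v else 0)
        = (if (((s ≠ t ∧ s ≠ u ∧ s ≠ v ∧ t ≠ u ∧ t ≠ v ∧ u ≠ v) ∧ u < v) ∧ s < t) ∧ s < u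
            then k s t u v else 0)
          + (if (((s ≠ t ∧ s ≠ u ∧ s ≠ v ∧ t ≠ u ∧ t ≠ v ∧ u ≠ v) ∧ u < v) ∧ s < t) ∧ u < s
            then k s t u v else 0) := by
      intro s t u v; split_ifs <;> first | ring1 | omega
    rw [dc_congr4 _ _ hpt, dc_add4]
    have hsw : (∑ s, ∑ t, ∑ u, ∑ v,
        if (((s ≠ t ∧ s ≠ u ∧ s ≠ v ∧ t ≠ u ∧ t ≠ v ∧ u ≠ v) ∧ u < v) ∧ s < t) ∧ u < s
          then k s t u v else 0)
        = ∑ s, ∑ t, ∑ u, ∑ v,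
        if (((s ≠ t ∧ s ≠ u ∧ s ≠ v ∧ t ≠ u ∧ t ≠ v ∧ u ≠ v) ∧ u < v) ∧ s < t) ∧ s < u
          then k s t u v else 0 := by
      rw [dc_pairswap' (fun s t u v =>
        if (((s ≠ t ∧ s ≠ u ∧ s ≠ v ∧ t ≠ u ∧ t ≠ v ∧ u ≠ v) ∧ u < v) ∧ s < t) ∧ u < s
          then k s t u v else 0)]
      refine dc_congr4 _ _ (fun s t u v => ?_)
      by_cases h : (((u ≠ v ∧ u ≠ s ∧ u ≠ t ∧ v ≠ s ∧ v ≠ t ∧ s ≠ t) ∧ s < t) ∧ u < v) ∧ s < u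
      · rw [if_pos h, if_pos (by omega), kswap u v s t]
      · rw [if_neg h, if_neg (by omega)]
    rw [hsw]; ring
  -- Step 4: three positions for t
  have s4 : (∑ s, ∑ t, ∑ u, ∑ v,
        if (((s ≠ t ∧ s ≠ u ∧ s ≠ v ∧ t ≠ u ∧ t ≠ v ∧ u ≠ v) ∧ u < v) ∧ s < t) ∧ s < u
          then k s t u v else 0)
      = 3 * ∑ s, ∑ t, ∑ u, ∑ v, if s < t ∧ t < u ∧ u < v then k s t u v else 0 := by
    have hpt : ∀ s t u v : Fin n,
        (if (((s ≠ t ∧ s ≠ u ∧ s ≠ v ∧ t ≠ u ∧ t ≠ v ∧ u ≠ v) ∧ u < v) ∧ s < t) ∧ s < u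
          then k s t u v else 0)
        = ((if s < t ∧ t < u ∧ u < v then k s t u v else 0)
          + (if s < u ∧ u < t ∧ t < v then k s t u v else 0))
          + (if s < u ∧ u < v ∧ v < t then k s t u v else 0) := by
      intro s t u v; split_ifs <;> first | ring1 | omega
    rw [dc_congr4 _ _ hpt, dc_add4, dc_add4]
    have h2 : (∑ s, ∑ t, ∑ u, ∑ v, if s < u ∧ u < t ∧ t < v then k s t u v else 0)
        = ∑ s, ∑ t, ∑ u, ∑ v, if s < t ∧ t < u ∧ u < v then k s t u v else 0 := by
      rw [dc_swap23 (fun s t u v => if s < u ∧ u < t ∧ t < v then k s t u v else 0)]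
      exact dc_congr4 _ _ (fun s t u v => by
        by_cases h : s < t ∧ t < u ∧ u < v
        · rw [if_pos h, if_pos h, (h23 s t u v).symm]
        · rw [if_neg h, if_neg h])
    have h3 : (∑ s, ∑ t, ∑ u, ∑ v, if s < u ∧ u < v ∧ v < t then k s t u v else 0)
        = ∑ s, ∑ t, ∑ u, ∑ v, if s < t ∧ t < u ∧ u < v then k s t u v else 0 := by
      rw [dc_cycle (fun s t u v => if s < u ∧ u < v ∧ v < t then k s t u v else 0)]
      exact dc_congr4 _ _ (fun s t u v => by
        by_cases h : s < t ∧ t < u ∧ u < v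
        · rw [if_pos h, if_pos h, kcyc s t u v]
        · rw [if_neg h, if_neg h])
    rw [h2, h3]; ring
  rw [s1, s2, s3, s4]; ring

theorem dc_cycle2 {n : ℕ} (G : Fin n → Fin n → Fin n → Fin n → ℝ) :
    (∑ s, ∑ t, ∑ u, ∑ v, G s t u v) = ∑ s, ∑ t, ∑ u, ∑ v, G s u v t :=
  (dc_swap34 G).trans (dc_swap23 (fun a b c d => G a b d c))

theorem dc_sum_erase2 {n : ℕ} (f : Fin n → ℝ) {s t : Fin n} (h : s ≠ t) :
    (∑ v, if v ≠ s ∧ v ≠ t then f v else 0) = (∑ v, f v) - f s - f t := by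
  have hpt : ∀ v, (if v ≠ s ∧ v ≠ t then f v else 0)
      = f v - (if v = s then f v else 0) - (if v = t then f v else 0) := by
    intro v
    by_cases h1 : v = s
    · subst h1; rw [if_neg (by tauto), if_pos rfl, if_neg (by omega)]; ring
    · by_cases h2 : v = t
      · subst h2; rw [if_neg (by tauto), if_neg h1, if_pos rfl]; ring
      · rw [if_pos ⟨h1, h2⟩, if_neg h1, if_neg h2]; ring
  rw [Finset.sum_congr rfl (fun v _ => hpt v), Finset.sum_sub_distrib, Finset.sum_sub_distrib,
    Finset.sum_ite_eq' Finset.univ s f, Finset.sum_ite_eq' Finset.univ t f]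
  simp

theorem dc_sum_erase3 {n : ℕ} (f : Fin n → ℝ) {s t u : Fin n} (hst : s ≠ t) (hsu : s ≠ u)
    (htu : t ≠ u) :
    (∑ v, if v ≠ s ∧ v ≠ t ∧ v ≠ u then f v else 0) = (∑ v, f v) - f s - f t - f u := by
  have hpt : ∀ v, (if v ≠ s ∧ v ≠ t ∧ v ≠ u then f v else 0)
      = f v - (if v = s then f v else 0) - (if v = t then f v else 0)
        - (if v = u then f v else 0) := by
    intro v
    by_cases h1 : v = s
    · subst h1; rw [if_neg (by tauto), if_pos rfl, if_neg (by omega), if_neg (by omega)]; ring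
    · by_cases h2 : v = t
      · subst h2; rw [if_neg (by tauto), if_neg h1, if_pos rfl, if_neg (by omega)]; ring
      · by_cases h3 : v = u
        · subst h3; rw [if_neg (by tauto), if_neg h1, if_neg h2, if_pos rfl]; ring
        · rw [if_pos ⟨h1, h2, h3⟩, if_neg h1, if_neg h2, if_neg h3]; ring
  rw [Finset.sum_congr rfl (fun v _ => hpt v)]
  rw [Finset.sum_sub_distrib, Finset.sum_sub_distrib, Finset.sum_sub_distrib,
    Finset.sum_ite_eq' Finset.univ s f, Finset.sum_ite_eq' Finset.univ t f,
    Finset.sum_ite_eq' Finset.univ u f]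
  simp

theorem dc_peel {n : ℕ} (x y : Fin n → ℝ) :
    (∑ s, ∑ t, ∑ u, ∑ v, if s ≠ t ∧ s ≠ u ∧ s ≠ v ∧ t ≠ u ∧ t ≠ v ∧ u ≠ v
        then ((x s - x t)*(y s - y t)) * ((x u - x v)*(y u - y v)) else 0)
    = ∑ s, ∑ t, ((x s - x t)*(y s - y t)) * ((∑ a, ∑ b, (x a - x b)*(y a - y b))
        - 2*(∑ b, (x s - x b)*(y s - y b)) - 2*(∑ b, (x t - x b)*(y t - y b))
        + 2*((x s - x t)*(y s - y t))) := by
  refine Finset.sum_congr rfl fun s _ => Finset.sum_congr rfl fun t _ => ?_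
  by_cases hst : s = t
  · subst hst
    have h0 : (∑ u, ∑ v, if s ≠ s ∧ s ≠ u ∧ s ≠ v ∧ s ≠ u ∧ s ≠ v ∧ u ≠ v
        then ((x s - x s)*(y s - y s)) * ((x u - x v)*(y u - y v)) else 0) = 0 :=
      Finset.sum_eq_zero fun u _ => Finset.sum_eq_zero fun v _ => if_neg (by omega)
    rw [h0]; ring
  · have hst' : s ≠ t := hst
    have st1 : ∀ u : Fin n, (∑ v, if s ≠ t ∧ s ≠ u ∧ s ≠ v ∧ t ≠ u ∧ t ≠ v ∧ u ≠ v
          then ((x s - x t)*(y s - y t)) * ((x u - x v)*(y u - y v)) else 0)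
        = (if u ≠ s ∧ u ≠ t then
            ((∑ v, ((x s - x t)*(y s - y t)) * ((x u - x v)*(y u - y v)))
            - ((x s - x t)*(y s - y t)) * ((x u - x s)*(y u - y s))
            - ((x s - x t)*(y s - y t)) * ((x u - x t)*(y u - y t))
            - ((x s - x t)*(y s - y t)) * ((x u - x u)*(y u - y u))) else 0) := by
      intro u
      by_cases hu : u ≠ s ∧ u ≠ t
      · rw [if_pos hu,
          ← dc_sum_erase3 (fun v => ((x s - x t)*(y s - y t)) * ((x u - x v)*(y u - y v)))
            hst' (show s ≠ u by omega) (show t ≠ u by omega)]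
        exact Finset.sum_congr rfl fun v _ => if_congr (by omega) rfl rfl
      · rw [if_neg hu]
        exact Finset.sum_eq_zero fun v _ => if_neg (by omega)
    rw [Finset.sum_congr rfl fun u _ => st1 u]
    rw [dc_sum_erase2 _ hst']
    have e1 : (∑ u, (((∑ v, ((x s - x t)*(y s - y t)) * ((x u - x v)*(y u - y v)))
            - ((x s - x t)*(y s - y t)) * ((x u - x s)*(y u - y s))
            - ((x s - x t)*(y s - y t)) * ((x u - x t)*(y u - y t))
            - ((x s - x t)*(y s - y t)) * ((x u - x u)*(y u - y u)))))
        = ((x s - x t)*(y s - y t)) * (∑ a, ∑ b, (x a - x b)*(y a - y b))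
          - ((x s - x t)*(y s - y t)) * (∑ b, (x s - x b)*(y s - y b))
          - ((x s - x t)*(y s - y t)) * (∑ b, (x t - x b)*(y t - y b)) := by
      rw [Finset.sum_sub_distrib, Finset.sum_sub_distrib, Finset.sum_sub_distrib]
      have a1 : (∑ u, ∑ v, ((x s - x t)*(y s - y t)) * ((x u - x v)*(y u - y v)))
          = ((x s - x t)*(y s - y t)) * (∑ a, ∑ b, (x a - x b)*(y a - y b)) := by
        rw [Finset.mul_sum]
        exact Finset.sum_congr rfl fun u _ => (Finset.mul_sum ..).symm
      have a2 : (∑ u, ((x s - x t)*(y s - y t)) * ((x u - x s)*(y u - y s)))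
          = ((x s - x t)*(y s - y t)) * (∑ b, (x s - x b)*(y s - y b)) := by
        rw [Finset.mul_sum]
        exact Finset.sum_congr rfl fun u _ => by ring
      have a3 : (∑ u, ((x s - x t)*(y s - y t)) * ((x u - x t)*(y u - y t)))
          = ((x s - x t)*(y s - y t)) * (∑ b, (x t - x b)*(y t - y b)) := by
        rw [Finset.mul_sum]
        exact Finset.sum_congr rfl fun u _ => by ring
      have a4 : (∑ u, ((x s - x t)*(y s - y t)) * ((x u - x u)*(y u - y u))) = 0 :=
        Finset.sum_eq_zero fun u _ => by ring
      rw [a1, a2, a3, a4]; ring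
    have b2 : (∑ v, ((x s - x t)*(y s - y t)) * ((x s - x v)*(y s - y v)))
        = ((x s - x t)*(y s - y t)) * (∑ b, (x s - x b)*(y s - y b)) := by
      rw [Finset.mul_sum]
    have b3 : (∑ v, ((x s - x t)*(y s - y t)) * ((x t - x v)*(y t - y v)))
        = ((x s - x t)*(y s - y t)) * (∑ b, (x t - x b)*(y t - y b)) := by
      rw [Finset.mul_sum]
    rw [e1, b2, b3]; ring

theorem perm4_sum (M : Type*) [AddCommMonoid M] (g : Fin 4 → Fin 4 → Fin 4 → Fin 4 → M) :
    ∑ σ : Equiv.Perm (Fin 4), g (σ 0) (σ 1) (σ 2) (σ 3)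
    = g 0 1 2 3 + g 0 1 3 2 + g 0 2 1 3 + g 0 2 3 1 + g 0 3 1 2 + g 0 3 2 1
    + g 1 0 2 3 + g 1 0 3 2 + g 1 2 0 3 + g 1 2 3 0 + g 1 3 0 2 + g 1 3 2 0
    + g 2 0 1 3 + g 2 0 3 1 + g 2 1 0 3 + g 2 1 3 0 + g 2 3 0 1 + g 2 3 1 0
    + g 3 0 1 2 + g 3 0 2 1 + g 3 1 0 2 + g 3 1 2 0 + g 3 2 0 1 + g 3 2 1 0 := by
  have e1 : (1 : Fin 4) = (0 : Fin 3).succ := rfl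
  have e2 : (2 : Fin 4) = (1 : Fin 3).succ := rfl
  have e3 : (3 : Fin 4) = (2 : Fin 3).succ := rfl
  have f1 : (1 : Fin 3) = (0 : Fin 2).succ := rfl
  have f2 : (2 : Fin 3) = (1 : Fin 2).succ := rfl
  rw [← Equiv.sum_comp Equiv.Perm.decomposeFin.symm, Fintype.sum_prod_type]
  conv_lhs => enter [2, a]; rw [← Equiv.sum_comp Equiv.Perm.decomposeFin.symm, Fintype.sum_prod_type]
  conv_lhs =>
    enter [2, a, 2, b]
    rw [show (univ : Finset (Perm (Fin 2))) = {1, Equiv.swap 0 1} from by decide]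
  rw [Fin.sum_univ_four]
  simp only [Fin.sum_univ_three,
    Finset.sum_pair (show (1 : Perm (Fin 2)) ≠ Equiv.swap 0 1 by decide)]
  simp only [e1, e2, e3, f1, f2, Equiv.Perm.decomposeFin_symm_apply_zero,
    Equiv.Perm.decomposeFin_symm_apply_succ, Equiv.Perm.one_apply]
  norm_num [Equiv.swap_apply_def, Fin.ext_iff]
  abel

theorem dc_hkernel {n : ℕ} (x y : Fin n → ℝ) (s t u v : Fin n) :
    hKernel x y s t u v = (1/12) * (((x s - x t)*(y s - y t)) * ((x u - x v)*(y u - y v))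
      + ((x s - x u)*(y s - y u)) * ((x t - x v)*(y t - y v))
      + ((x s - x v)*(y s - y v)) * ((x t - x u)*(y t - y u))) := by
  rw [hKernel, perm4_sum ℝ (fun a b c d =>
    (1 / 4 : ℝ) * (x (![s, t, u, v] a) - x (![s, t, u, v] b))
      * (y (![s, t, u, v] a) - y (![s, t, u, v] b))
      * (x (![s, t, u, v] c) - x (![s, t, u, v] d))
      * (y (![s, t, u, v] c) - y (![s, t, u, v] d)))]
  norm_num [Nat.factorial]
  simp only [Matrix.cons_val_two, Matrix.vecHead, Matrix.vecTail,
    show (3 : Fin 4) = (2 : Fin 3).succ from rfl, Matrix.cons_val_succ,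
    Function.comp_apply, Matrix.cons_val_zero]
  ring


set_option maxHeartbeats 4000000 in
theorem dc_core (n : ℕ) (hn : 4 ≤ n) (x y : Fin n → ℝ) :
    (1 / 4 : ℝ) * ((∑ s, ∑ t, if s ≠ t then
        uCenter (Matrix.of fun a b => (x a - x b)^2) s t *
        uCenter (Matrix.of fun a b => (y a - y b)^2) s t else 0)
      / ((n : ℝ) * ((n : ℝ) - 3))) = covnSq x y := by
  have hN : (4:ℝ) ≤ (n:ℝ) := by exact_mod_cast hn
  have h0 : ((n:ℝ)) ≠ 0 := by linarith
  have h1 : ((n:ℝ)) - 1 ≠ 0 := by linarith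
  have h2 : ((n:ℝ)) - 2 ≠ 0 := by linarith
  have h3 : ((n:ℝ)) - 3 ≠ 0 := by linarith
  have rowA : ∀ s : Fin n, (∑ b, (x s - x b)^2)
      = ((n:ℝ))*(x s)^2 - 2*(∑ i, x i)*(x s) + (∑ i, (x i)^2) := fun s =>
    (dc_expand_sum x y _ ((x s)^2) (-(2*(x s))) 0 1 0 0 0 0 0 (fun b => by ring)).trans (by ring)
  have colA : ∀ t : Fin n, (∑ a, (x a - x t)^2)
      = ((n:ℝ))*(x t)^2 - 2*(∑ i, x i)*(x t) + (∑ i, (x i)^2) := fun t =>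
    (dc_expand_sum x y _ ((x t)^2) (-(2*(x t))) 0 1 0 0 0 0 0 (fun a => by ring)).trans (by ring)
  have totA : (∑ a, ∑ b, (x a - x b)^2)
      = 2*((n:ℝ))*(∑ i, (x i)^2) - 2*(∑ i, x i)^2 := by
    rw [Finset.sum_congr rfl (fun a _ => rowA a)]
    exact (dc_expand_sum x y _ (∑ i, (x i)^2) (-(2*(∑ i, x i))) 0 ((n:ℝ)) 0 0 0 0 0
      (fun a => by ring)).trans (by ring)
  have rowB : ∀ s : Fin n, (∑ b, (y s - y b)^2)
      = ((n:ℝ))*(y s)^2 - 2*(∑ i, y i)*(y s) + (∑ i, (y i)^2) := fun s =>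
    (dc_expand_sum x y _ ((y s)^2) 0 (-(2*(y s))) 0 1 0 0 0 0 (fun b => by ring)).trans (by ring)
  have colB : ∀ t : Fin n, (∑ a, (y a - y t)^2)
      = ((n:ℝ))*(y t)^2 - 2*(∑ i, y i)*(y t) + (∑ i, (y i)^2) := fun t =>
    (dc_expand_sum x y _ ((y t)^2) 0 (-(2*(y t))) 0 1 0 0 0 0 (fun a => by ring)).trans (by ring)
  have totB : (∑ a, ∑ b, (y a - y b)^2)
      = 2*((n:ℝ))*(∑ i, (y i)^2) - 2*(∑ i, y i)^2 := by
    rw [Finset.sum_congr rfl (fun a _ => rowB a)]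
    exact (dc_expand_sum x y _ (∑ i, (y i)^2) 0 (-(2*(∑ i, y i))) 0 ((n:ℝ)) 0 0 0 0
      (fun a => by ring)).trans (by ring)
  have hEA : ∀ s t : Fin n, s ≠ t →
      uCenter (Matrix.of fun a b => (x a - x b)^2) s t = ((x s - x t)^2 - (((n:ℝ))*(x s)^2 - 2*(∑ i, x i)*(x s) + (∑ i, (x i)^2))/((n:ℝ)-2) - (((n:ℝ))*(x t)^2 - 2*(∑ i, x i)*(x t) + (∑ i, (x i)^2))/((n:ℝ)-2) + (2*((n:ℝ))*(∑ i, (x i)^2) - 2*(∑ i, x i)^2)/(((n:ℝ)-1)*((n:ℝ)-2))) := by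
    intro s t hst
    simp only [uCenter, Matrix.of_apply]
    rw [if_neg hst, rowA s, colA t, totA]
  have hEB : ∀ s t : Fin n, s ≠ t →
      uCenter (Matrix.of fun a b => (y a - y b)^2) s t = ((y s - y t)^2 - (((n:ℝ))*(y s)^2 - 2*(∑ i, y i)*(y s) + (∑ i, (y i)^2))/((n:ℝ)-2) - (((n:ℝ))*(y t)^2 - 2*(∑ i, y i)*(y t) + (∑ i, (y i)^2))/((n:ℝ)-2) + (2*((n:ℝ))*(∑ i, (y i)^2) - 2*(∑ i, y i)^2)/(((n:ℝ)-1)*((n:ℝ)-2))) := by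
    intro s t hst
    simp only [uCenter, Matrix.of_apply]
    rw [if_neg hst, rowB s, colB t, totB]
  have key : (∑ s, ∑ t, if s ≠ t then
        uCenter (Matrix.of fun a b => (x a - x b)^2) s t *
        uCenter (Matrix.of fun a b => (y a - y b)^2) s t else 0)
      = (∑ s, ∑ t, ((x s - x t)^2 - (((n:ℝ))*(x s)^2 - 2*(∑ i, x i)*(x s) + (∑ i, (x i)^2))/((n:ℝ)-2) - (((n:ℝ))*(x t)^2 - 2*(∑ i, x i)*(x t) + (∑ i, (x i)^2))/((n:ℝ)-2) + (2*((n:ℝ))*(∑ i, (x i)^2) - 2*(∑ i, x i)^2)/(((n:ℝ)-1)*((n:ℝ)-2))) * ((y s - y t)^2 - (((n:ℝ))*(y s)^2 - 2*(∑ i, y i)*(y s) + (∑ i, (y i)^2))/((n:ℝ)-2) - (((n:ℝ))*(y t)^2 - 2*(∑ i, y i)*(y t) + (∑ i, (y i)^2))/((n:ℝ)-2) + (2*((n:ℝ))*(∑ i, (y i)^2) - 2*(∑ i, y i)^2)/(((n:ℝ)-1)*((n:ℝ)-2)))) - ∑ s, ((x s - x s)^2 - (((n:ℝ))*(x s)^2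 - 2*(∑ i, x i)*(x s) + (∑ i, (x i)^2))/((n:ℝ)-2) - (((n:ℝ))*(x s)^2 - 2*(∑ i, x i)*(x s) + (∑ i, (x i)^2))/((n:ℝ)-2) + (2*((n:ℝ))*(∑ i, (x i)^2) - 2*(∑ i, x i)^2)/(((n:ℝ)-1)*((n:ℝ)-2))) * ((y s - y s)^2 - (((n:ℝ))*(y s)^2 - 2*(∑ i, y i)*(y s) + (∑ i, (y i)^2))/((n:ℝ)-2) - (((n:ℝ))*(y s)^2 - 2*(∑ i, y i)*(y s) + (∑ i, (y i)^2))/((n:ℝ)-2) + (2*((n:ℝ))*(∑ i, (y i)^2) - 2*(∑ i, y i)^2)/(((n:ℝ)-1)*((n:ℝ)-2))) := by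
    have hpt : ∀ s t : Fin n, (if s ≠ t then
        uCenter (Matrix.of fun a b => (x a - x b)^2) s t *
        uCenter (Matrix.of fun a b => (y a - y b)^2) s t else 0)
        = (if s ≠ t then ((x s - x t)^2 - (((n:ℝ))*(x s)^2 - 2*(∑ i, x i)*(x s) + (∑ i, (x i)^2))/((n:ℝ)-2) - (((n:ℝ))*(x t)^2 - 2*(∑ i, x i)*(x t) + (∑ i, (x i)^2))/((n:ℝ)-2) + (2*((n:ℝ))*(∑ i, (x i)^2) - 2*(∑ i, x i)^2)/(((n:ℝ)-1)*((n:ℝ)-2))) * ((y s - y t)^2 - (((n:ℝ))*(y s)^2 - 2*(∑ i, y i)*(y s) + (∑ i, (y i)^2))/((n:ℝ)-2) - (((n:ℝ))*(y t)^2 - 2*(∑ i, y i)*(y t) + (∑ i, (y i)^2))/((n:ℝ)-2) + (2*((n:ℝ))*(∑ i, (y i)^2) - 2*(∑ i, y i)^2)/(((n:ℝ)-1)*((n:ℝ)-2))) else 0) := by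
      intro s t
      by_cases h : s = t
      · rw [if_neg (fun hc => hc h), if_neg (fun hc => hc h)]
      · rw [if_pos h, if_pos h, hEA s t h, hEB s t h]
    exact (Finset.sum_congr rfl fun s _ => Finset.sum_congr rfl fun t _ => hpt s t).trans
      (dc_sum_offdiag _)
  have hLHS : (∑ s, ∑ t, ((x s - x t)^2 - (((n:ℝ))*(x s)^2 - 2*(∑ i, x i)*(x s) + (∑ i, (x i)^2))/((n:ℝ)-2) - (((n:ℝ))*(x t)^2 - 2*(∑ i, x i)*(x t) + (∑ i, (x i)^2))/((n:ℝ)-2) + (2*((n:ℝ))*(∑ i, (x i)^2) - 2*(∑ i, x i)^2)/(((n:ℝ)-1)*((n:ℝ)-2))) * ((y s - y t)^2 - (((n:ℝ))*(y s)^2 - 2*(∑ i, y i)*(y s) + (∑ i, (y i)^2))/((n:ℝ)-2) - (((n:ℝ))*(y t)^2 - 2*(∑ i, y i)*(y t) + (∑ i, (y i)^2))/((n:ℝ)-2) + (2*((n:ℝ))*(∑ i, (y i)^2) - 2*(∑ i, y i)^2)/(((n:ℝ)-1)*((n:ℝ)-2)))) = ((4) * (∑ i, x i * y i)^2 + (2)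 * (∑ i, (x i)^2) * (∑ i, (y i)^2) + (-4) * (∑ i, y i) * (∑ i, (x i)^2 * y i) + (8) * (∑ i, y i)^2 * (∑ i, (x i)^2) * (1/((n:ℝ)-2)) + (-4) * (∑ i, x i) * (∑ i, x i * (y i)^2) + (-16) * (∑ i, x i) * (∑ i, y i) * (∑ i, x i * y i) * (1/((n:ℝ)-2)) + (8) * (∑ i, x i)^2 * (∑ i, (y i)^2) * (1/((n:ℝ)-2)) + (8) * (∑ i, x i)^2 * (∑ i, y i)^2 * (1/(((n:ℝ)-1)*((n:ℝ)-2))) + (8) * (∑ i, x i)^2 * (∑ i, y i)^2 * (1/((n:ℝ)-2))^2 + (2) * ((n:ℝ)) * (∑ i, (x i)^2 * (y i)^2) + (-12) * ((n:ℝ)) * (∑ i, (x i)^2) * (∑ i, (y i)^2) * (1/((n:ℝ)-2)) + (8) * ((n:ℝ)) * (∑ i, y i) * (∑ i, (x i)^2 * y i) * (1/((n:ℝ)-2)) + (-8) * ((n:ℝ)) * (∑ i, y i)^2 * (∑ i, (x i)^2) * (1/(((n:ℝ)-1)*((n:ℝ)-2))) + (-12) * ((n:ℝ)) * (∑ i,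 y i)^2 * (∑ i, (x i)^2) * (1/((n:ℝ)-2))^2 + (8) * ((n:ℝ)) * (∑ i, x i) * (∑ i, x i * (y i)^2) * (1/((n:ℝ)-2)) + (8) * ((n:ℝ)) * (∑ i, x i) * (∑ i, y i) * (∑ i, x i * y i) * (1/((n:ℝ)-2))^2 + (-8) * ((n:ℝ)) * (∑ i, x i)^2 * (∑ i, (y i)^2) * (1/(((n:ℝ)-1)*((n:ℝ)-2))) + (-12) * ((n:ℝ)) * (∑ i, x i)^2 * (∑ i, (y i)^2) * (1/((n:ℝ)-2))^2 + (-16) * ((n:ℝ)) * (∑ i, x i)^2 * (∑ i, y i)^2 * (1/((n:ℝ)-2)) * (1/(((n:ℝ)-1)*((n:ℝ)-2))) + (-4) * ((n:ℝ))^2 * (∑ i, (x i)^2 * (y i)^2) * (1/((n:ℝ)-2)) + (8) * ((n:ℝ))^2 * (∑ i, (x i)^2) * (∑ i, (y i)^2) * (1/(((n:ℝ)-1)*((n:ℝ)-2))) + (14) * ((n:ℝ))^2 * (∑ i, (x i)^2) * (∑ i, (y i)^2) * (1/((n:ℝ)-2))^2 + (-4) * ((n:ℝ))^2 * (∑ i,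 y i) * (∑ i, (x i)^2 * y i) * (1/((n:ℝ)-2))^2 + (16) * ((n:ℝ))^2 * (∑ i, y i)^2 * (∑ i, (x i)^2) * (1/((n:ℝ)-2)) * (1/(((n:ℝ)-1)*((n:ℝ)-2))) + (-4) * ((n:ℝ))^2 * (∑ i, x i) * (∑ i, x i * (y i)^2) * (1/((n:ℝ)-2))^2 + (16) * ((n:ℝ))^2 * (∑ i, x i)^2 * (∑ i, (y i)^2) * (1/((n:ℝ)-2)) * (1/(((n:ℝ)-1)*((n:ℝ)-2))) + (4) * ((n:ℝ))^2 * (∑ i, x i)^2 * (∑ i, y i)^2 * (1/(((n:ℝ)-1)*((n:ℝ)-2)))^2 + (2) * ((n:ℝ))^3 * (∑ i, (x i)^2 * (y i)^2) * (1/((n:ℝ)-2))^2 + (-16) * ((n:ℝ))^3 * (∑ i, (x i)^2) * (∑ i, (y i)^2) * (1/((n:ℝ)-2)) * (1/(((n:ℝ)-1)*((n:ℝ)-2))) + (-4) * ((n:ℝ))^3 * (∑ i, y i)^2 * (∑ i, (x i)^2) * (1/(((n:ℝ)-1)*((n:ℝ)-2)))^2 + (-4) * ((n:ℝ))^3 *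 (∑ i, x i)^2 * (∑ i, (y i)^2) * (1/(((n:ℝ)-1)*((n:ℝ)-2)))^2 + (4) * ((n:ℝ))^4 * (∑ i, (x i)^2) * (∑ i, (y i)^2) * (1/(((n:ℝ)-1)*((n:ℝ)-2)))^2) := by
    calc (∑ s, ∑ t, ((x s - x t)^2 - (((n:ℝ))*(x s)^2 - 2*(∑ i, x i)*(x s) + (∑ i, (x i)^2))/((n:ℝ)-2) - (((n:ℝ))*(x t)^2 - 2*(∑ i, x i)*(x t) + (∑ i, (x i)^2))/((n:ℝ)-2) + (2*((n:ℝ))*(∑ i, (x i)^2) - 2*(∑ i, x i)^2)/(((n:ℝ)-1)*((n:ℝ)-2))) * ((y s - y t)^2 - (((n:ℝ))*(y s)^2 - 2*(∑ i, y i)*(y s) + (∑ i, (y i)^2))/((n:ℝ)-2) - (((n:ℝ))*(y t)^2 - 2*(∑ i, y i)*(y t) + (∑ i, (y i)^2))/((n:ℝ)-2) + (2*((n:ℝ))*(∑ i, (y i)^2) - 2*(∑ i, y i)^2)/(((n:ℝ)-1)*((n:ℝ)-2))))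
        = ∑ s, (((4) * (∑ i, (x i)^2) * (∑ i, (y i)^2) * (1/((n:ℝ)-2))^2 + (4) * (∑ i, y i)^2 * (∑ i, (x i)^2) * (1/((n:ℝ)-2)) * (1/(((n:ℝ)-1)*((n:ℝ)-2))) + (4) * (∑ i, x i)^2 * (∑ i, (y i)^2) * (1/((n:ℝ)-2)) * (1/(((n:ℝ)-1)*((n:ℝ)-2))) + (4) * (∑ i, x i)^2 * (∑ i, y i)^2 * (1/(((n:ℝ)-1)*((n:ℝ)-2)))^2 + (-8) * ((n:ℝ)) * (∑ i, (x i)^2) * (∑ i, (y i)^2) * (1/((n:ℝ)-2)) * (1/(((n:ℝ)-1)*((n:ℝ)-2))) + (-4) * ((n:ℝ)) * (∑ i, y i)^2 * (∑ i, (x i)^2) * (1/(((n:ℝ)-1)*((n:ℝ)-2)))^2 + (-4) * ((n:ℝ)) * (∑ i, x i)^2 * (∑ i, (y i)^2) * (1/(((n:ℝ)-1)*((n:ℝ)-2)))^2 + (4) * ((n:ℝ))^2 * (∑ i, (x i)^2) * (∑ i, (y i)^2) * (1/(((n:ℝ)-1)*((n:ℝ)-2)))^2 + (-4) * (y s) *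 (∑ i, y i) * (∑ i, (x i)^2) * (1/((n:ℝ)-2))^2 + (-4) * (y s) * (∑ i, x i)^2 * (∑ i, y i) * (1/((n:ℝ)-2)) * (1/(((n:ℝ)-1)*((n:ℝ)-2))) + (4) * (y s) * ((n:ℝ)) * (∑ i, y i) * (∑ i, (x i)^2) * (1/((n:ℝ)-2)) * (1/(((n:ℝ)-1)*((n:ℝ)-2))) + (-2) * (y s)^2 * (∑ i, (x i)^2) * (1/((n:ℝ)-2)) + (-2) * (y s)^2 * (∑ i, x i)^2 * (1/(((n:ℝ)-1)*((n:ℝ)-2))) + (2) * (y s)^2 * ((n:ℝ)) * (∑ i, (x i)^2) * (1/(((n:ℝ)-1)*((n:ℝ)-2))) + (2) * (y s)^2 * ((n:ℝ)) * (∑ i, (x i)^2) * (1/((n:ℝ)-2))^2 + (2) * (y s)^2 * ((n:ℝ)) * (∑ i, x i)^2 * (1/((n:ℝ)-2)) * (1/(((n:ℝ)-1)*((n:ℝ)-2))) + (-2) * (y s)^2 * ((n:ℝ))^2 * (∑ i, (x i)^2) * (1/((n:ℝ)-2)) * (1/(((n:ℝ)-1)*((n:ℝ)-2))) + (-4) *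 (x s) * (∑ i, x i) * (∑ i, (y i)^2) * (1/((n:ℝ)-2))^2 + (-4) * (x s) * (∑ i, x i) * (∑ i, y i)^2 * (1/((n:ℝ)-2)) * (1/(((n:ℝ)-1)*((n:ℝ)-2))) + (4) * (x s) * ((n:ℝ)) * (∑ i, x i) * (∑ i, (y i)^2) * (1/((n:ℝ)-2)) * (1/(((n:ℝ)-1)*((n:ℝ)-2))) + (4) * (x s) * (y s) * (∑ i, x i) * (∑ i, y i) * (1/((n:ℝ)-2))^2 + (2) * (x s) * (y s)^2 * (∑ i, x i) * (1/((n:ℝ)-2)) + (-2) * (x s) * (y s)^2 * ((n:ℝ)) * (∑ i, x i) * (1/((n:ℝ)-2))^2 + (-2) * (x s)^2 * (∑ i, (y i)^2) * (1/((n:ℝ)-2)) + (-2) * (x s)^2 * (∑ i, y i)^2 * (1/(((n:ℝ)-1)*((n:ℝ)-2))) + (2) * (x s)^2 * ((n:ℝ)) * (∑ i, (y i)^2) * (1/(((n:ℝ)-1)*((n:ℝ)-2))) + (2) * (x s)^2 * ((n:ℝ)) * (∑ i, (y i)^2) * (1/((n:ℝ)-2))^2 + (2) * (x s)^2 * ((n:ℝ))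 * (∑ i, y i)^2 * (1/((n:ℝ)-2)) * (1/(((n:ℝ)-1)*((n:ℝ)-2))) + (-2) * (x s)^2 * ((n:ℝ))^2 * (∑ i, (y i)^2) * (1/((n:ℝ)-2)) * (1/(((n:ℝ)-1)*((n:ℝ)-2))) + (2) * (x s)^2 * (y s) * (∑ i, y i) * (1/((n:ℝ)-2)) + (-2) * (x s)^2 * (y s) * ((n:ℝ)) * (∑ i, y i) * (1/((n:ℝ)-2))^2 + (1) * (x s)^2 * (y s)^2 + (-2) * (x s)^2 * (y s)^2 * ((n:ℝ)) * (1/((n:ℝ)-2)) + (1) * (x s)^2 * (y s)^2 * ((n:ℝ))^2 * (1/((n:ℝ)-2))^2) * ((n:ℝ)) + ((-4) * (∑ i, x i) * (∑ i, (y i)^2) * (1/((n:ℝ)-2))^2 + (-4) * (∑ i, x i) * (∑ i, y i)^2 * (1/((n:ℝ)-2)) * (1/(((n:ℝ)-1)*((n:ℝ)-2))) + (4) * ((n:ℝ)) * (∑ i, x i) * (∑ i, (y i)^2) * (1/((n:ℝ)-2)) * (1/(((n:ℝ)-1)*((n:ℝ)-2))) + (4) * (y s) * (∑ i, x i) * (∑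 i, y i) * (1/((n:ℝ)-2))^2 + (2) * (y s)^2 * (∑ i, x i) * (1/((n:ℝ)-2)) + (-2) * (y s)^2 * ((n:ℝ)) * (∑ i, x i) * (1/((n:ℝ)-2))^2 + (4) * (x s) * (∑ i, (y i)^2) * (1/((n:ℝ)-2)) + (4) * (x s) * (∑ i, y i)^2 * (1/(((n:ℝ)-1)*((n:ℝ)-2))) + (-4) * (x s) * ((n:ℝ)) * (∑ i, (y i)^2) * (1/(((n:ℝ)-1)*((n:ℝ)-2))) + (-4) * (x s) * (y s) * (∑ i, y i) * (1/((n:ℝ)-2)) + (-2) * (x s) * (y s)^2 + (2) * (x s) * (y s)^2 * ((n:ℝ)) * (1/((n:ℝ)-2))) * (∑ i, x i) + ((-4) * (∑ i, y i) * (∑ i, (x i)^2) * (1/((n:ℝ)-2))^2 + (-4) * (∑ i, x i)^2 * (∑ i, y i) * (1/((n:ℝ)-2)) * (1/(((n:ℝ)-1)*((n:ℝ)-2))) + (4) * ((n:ℝ)) * (∑ i, y i) * (∑ i, (x i)^2) * (1/((n:ℝ)-2)) * (1/(((n:ℝ)-1)*((n:ℝ)-2))) + (4) * (y s) * (∑ i,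 (x i)^2) * (1/((n:ℝ)-2)) + (4) * (y s) * (∑ i, x i)^2 * (1/(((n:ℝ)-1)*((n:ℝ)-2))) + (-4) * (y s) * ((n:ℝ)) * (∑ i, (x i)^2) * (1/(((n:ℝ)-1)*((n:ℝ)-2))) + (4) * (x s) * (∑ i, x i) * (∑ i, y i) * (1/((n:ℝ)-2))^2 + (-4) * (x s) * (y s) * (∑ i, x i) * (1/((n:ℝ)-2)) + (2) * (x s)^2 * (∑ i, y i) * (1/((n:ℝ)-2)) + (-2) * (x s)^2 * ((n:ℝ)) * (∑ i, y i) * (1/((n:ℝ)-2))^2 + (-2) * (x s)^2 * (y s) + (2) * (x s)^2 * (y s) * ((n:ℝ)) * (1/((n:ℝ)-2))) * (∑ i, y i) + ((-2) * (∑ i, (y i)^2) * (1/((n:ℝ)-2)) + (-2) * (∑ i, y i)^2 * (1/(((n:ℝ)-1)*((n:ℝ)-2))) + (2) * ((n:ℝ)) * (∑ i, (y i)^2) * (1/(((n:ℝ)-1)*((n:ℝ)-2))) + (2) * ((n:ℝ)) * (∑ i, (y i)^2) * (1/((n:ℝ)-2))^2 + (2) * ((n:ℝ)) * (∑ i, y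 i)^2 * (1/((n:ℝ)-2)) * (1/(((n:ℝ)-1)*((n:ℝ)-2))) + (-2) * ((n:ℝ))^2 * (∑ i, (y i)^2) * (1/((n:ℝ)-2)) * (1/(((n:ℝ)-1)*((n:ℝ)-2))) + (2) * (y s) * (∑ i, y i) * (1/((n:ℝ)-2)) + (-2) * (y s) * ((n:ℝ)) * (∑ i, y i) * (1/((n:ℝ)-2))^2 + (1) * (y s)^2 + (-2) * (y s)^2 * ((n:ℝ)) * (1/((n:ℝ)-2)) + (1) * (y s)^2 * ((n:ℝ))^2 * (1/((n:ℝ)-2))^2) * (∑ i, (x i)^2) + ((-2) * (∑ i, (x i)^2) * (1/((n:ℝ)-2)) + (-2) * (∑ i, x i)^2 * (1/(((n:ℝ)-1)*((n:ℝ)-2))) + (2) * ((n:ℝ)) * (∑ i, (x i)^2) * (1/(((n:ℝ)-1)*((n:ℝ)-2))) + (2) * ((n:ℝ)) * (∑ i, (x i)^2) * (1/((n:ℝ)-2))^2 + (2) * ((n:ℝ)) * (∑ i, x i)^2 * (1/((n:ℝ)-2)) * (1/(((n:ℝ)-1)*((n:ℝ)-2))) + (-2) * ((n:ℝ))^2 *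 (∑ i, (x i)^2) * (1/((n:ℝ)-2)) * (1/(((n:ℝ)-1)*((n:ℝ)-2))) + (2) * (x s) * (∑ i, x i) * (1/((n:ℝ)-2)) + (-2) * (x s) * ((n:ℝ)) * (∑ i, x i) * (1/((n:ℝ)-2))^2 + (1) * (x s)^2 + (-2) * (x s)^2 * ((n:ℝ)) * (1/((n:ℝ)-2)) + (1) * (x s)^2 * ((n:ℝ))^2 * (1/((n:ℝ)-2))^2) * (∑ i, (y i)^2) + ((4) * (∑ i, x i) * (∑ i, y i) * (1/((n:ℝ)-2))^2 + (-4) * (y s) * (∑ i, x i) * (1/((n:ℝ)-2)) + (-4) * (x s) * (∑ i, y i) * (1/((n:ℝ)-2)) + (4) * (x s) * (y s)) * (∑ i, x i * y i) + ((2) * (∑ i, y i) * (1/((n:ℝ)-2)) + (-2) * ((n:ℝ)) * (∑ i, y i) * (1/((n:ℝ)-2))^2 + (-2) * (y s) + (2) * (y s) * ((n:ℝ)) * (1/((n:ℝ)-2))) * (∑ i, (x i)^2 * y i) + ((2) * (∑ i, x i) * (1/((n:ℝ)-2)) + (-2) * ((n:ℝ)) * (∑ i, x i) * (1/((n:ℝ)-2))^2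 + (-2) * (x s) + (2) * (x s) * ((n:ℝ)) * (1/((n:ℝ)-2))) * (∑ i, x i * (y i)^2) + ((1) + (-2) * ((n:ℝ)) * (1/((n:ℝ)-2)) + (1) * ((n:ℝ))^2 * (1/((n:ℝ)-2))^2) * (∑ i, (x i)^2 * (y i)^2)) :=
          Finset.sum_congr rfl (fun s _ => dc_expand_sum x y _
            ((4) * (∑ i, (x i)^2) * (∑ i, (y i)^2) * (1/((n:ℝ)-2))^2 + (4) * (∑ i, y i)^2 * (∑ i, (x i)^2) * (1/((n:ℝ)-2)) * (1/(((n:ℝ)-1)*((n:ℝ)-2))) + (4) * (∑ i, x i)^2 * (∑ i, (y i)^2) * (1/((n:ℝ)-2)) * (1/(((n:ℝ)-1)*((n:ℝ)-2))) + (4) * (∑ i, x i)^2 * (∑ i, y i)^2 * (1/(((n:ℝ)-1)*((n:ℝ)-2)))^2 + (-8) * ((n:ℝ)) * (∑ i, (x i)^2) * (∑ i, (y i)^2) * (1/((n:ℝ)-2)) * (1/(((n:ℝ)-1)*((n:ℝ)-2))) + (-4) * ((n:ℝ)) * (∑ i, y i)^2 * (∑ i, (x i)^2) * (1/(((n:ℝ)-1)*((n:ℝ)-2)))^2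 + (-4) * ((n:ℝ)) * (∑ i, x i)^2 * (∑ i, (y i)^2) * (1/(((n:ℝ)-1)*((n:ℝ)-2)))^2 + (4) * ((n:ℝ))^2 * (∑ i, (x i)^2) * (∑ i, (y i)^2) * (1/(((n:ℝ)-1)*((n:ℝ)-2)))^2 + (-4) * (y s) * (∑ i, y i) * (∑ i, (x i)^2) * (1/((n:ℝ)-2))^2 + (-4) * (y s) * (∑ i, x i)^2 * (∑ i, y i) * (1/((n:ℝ)-2)) * (1/(((n:ℝ)-1)*((n:ℝ)-2))) + (4) * (y s) * ((n:ℝ)) * (∑ i, y i) * (∑ i, (x i)^2) * (1/((n:ℝ)-2)) * (1/(((n:ℝ)-1)*((n:ℝ)-2))) + (-2) * (y s)^2 * (∑ i, (x i)^2) * (1/((n:ℝ)-2)) + (-2) * (y s)^2 * (∑ i, x i)^2 * (1/(((n:ℝ)-1)*((n:ℝ)-2))) + (2) * (y s)^2 * ((n:ℝ)) * (∑ i, (x i)^2) * (1/(((n:ℝ)-1)*((n:ℝ)-2))) + (2) * (y s)^2 * ((n:ℝ)) * (∑ i, (x i)^2) * (1/((n:ℝ)-2))^2 + (2) * (y s)^2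 * ((n:ℝ)) * (∑ i, x i)^2 * (1/((n:ℝ)-2)) * (1/(((n:ℝ)-1)*((n:ℝ)-2))) + (-2) * (y s)^2 * ((n:ℝ))^2 * (∑ i, (x i)^2) * (1/((n:ℝ)-2)) * (1/(((n:ℝ)-1)*((n:ℝ)-2))) + (-4) * (x s) * (∑ i, x i) * (∑ i, (y i)^2) * (1/((n:ℝ)-2))^2 + (-4) * (x s) * (∑ i, x i) * (∑ i, y i)^2 * (1/((n:ℝ)-2)) * (1/(((n:ℝ)-1)*((n:ℝ)-2))) + (4) * (x s) * ((n:ℝ)) * (∑ i, x i) * (∑ i, (y i)^2) * (1/((n:ℝ)-2)) * (1/(((n:ℝ)-1)*((n:ℝ)-2))) + (4) * (x s) * (y s) * (∑ i, x i) * (∑ i, y i) * (1/((n:ℝ)-2))^2 + (2) * (x s) * (y s)^2 * (∑ i, x i) * (1/((n:ℝ)-2)) + (-2) * (x s) * (y s)^2 * ((n:ℝ)) * (∑ i, x i) * (1/((n:ℝ)-2))^2 + (-2) * (x s)^2 * (∑ i, (y i)^2) * (1/((n:ℝ)-2)) + (-2) * (x s)^2 * (∑ i, y i)^2 * (1/(((n:ℝ)-1)*((n:ℝ)-2)))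 + (2) * (x s)^2 * ((n:ℝ)) * (∑ i, (y i)^2) * (1/(((n:ℝ)-1)*((n:ℝ)-2))) + (2) * (x s)^2 * ((n:ℝ)) * (∑ i, (y i)^2) * (1/((n:ℝ)-2))^2 + (2) * (x s)^2 * ((n:ℝ)) * (∑ i, y i)^2 * (1/((n:ℝ)-2)) * (1/(((n:ℝ)-1)*((n:ℝ)-2))) + (-2) * (x s)^2 * ((n:ℝ))^2 * (∑ i, (y i)^2) * (1/((n:ℝ)-2)) * (1/(((n:ℝ)-1)*((n:ℝ)-2))) + (2) * (x s)^2 * (y s) * (∑ i, y i) * (1/((n:ℝ)-2)) + (-2) * (x s)^2 * (y s) * ((n:ℝ)) * (∑ i, y i) * (1/((n:ℝ)-2))^2 + (1) * (x s)^2 * (y s)^2 + (-2) * (x s)^2 * (y s)^2 * ((n:ℝ)) * (1/((n:ℝ)-2)) + (1) * (x s)^2 * (y s)^2 * ((n:ℝ))^2 * (1/((n:ℝ)-2))^2)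
      ((-4) * (∑ i, x i) * (∑ i, (y i)^2) * (1/((n:ℝ)-2))^2 + (-4) * (∑ i, x i) * (∑ i, y i)^2 * (1/((n:ℝ)-2)) * (1/(((n:ℝ)-1)*((n:ℝ)-2))) + (4) * ((n:ℝ)) * (∑ i, x i) * (∑ i, (y i)^2) * (1/((n:ℝ)-2)) * (1/(((n:ℝ)-1)*((n:ℝ)-2))) + (4) * (y s) * (∑ i, x i) * (∑ i, y i) * (1/((n:ℝ)-2))^2 + (2) * (y s)^2 * (∑ i, x i) * (1/((n:ℝ)-2)) + (-2) * (y s)^2 * ((n:ℝ)) * (∑ i, x i) * (1/((n:ℝ)-2))^2 + (4) * (x s) * (∑ i, (y i)^2) * (1/((n:ℝ)-2)) + (4) * (x s) * (∑ i, y i)^2 * (1/(((n:ℝ)-1)*((n:ℝ)-2))) + (-4) * (x s) * ((n:ℝ)) * (∑ i, (y i)^2) * (1/(((n:ℝ)-1)*((n:ℝ)-2))) + (-4) * (x s) * (y s) * (∑ i, y i) * (1/((n:ℝ)-2)) + (-2) * (x s) * (y s)^2 + (2) * (x s) * (y s)^2 * ((n:ℝ)) * (1/((n:ℝ)-2)))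
      ((-4) * (∑ i, y i) * (∑ i, (x i)^2) * (1/((n:ℝ)-2))^2 + (-4) * (∑ i, x i)^2 * (∑ i, y i) * (1/((n:ℝ)-2)) * (1/(((n:ℝ)-1)*((n:ℝ)-2))) + (4) * ((n:ℝ)) * (∑ i, y i) * (∑ i, (x i)^2) * (1/((n:ℝ)-2)) * (1/(((n:ℝ)-1)*((n:ℝ)-2))) + (4) * (y s) * (∑ i, (x i)^2) * (1/((n:ℝ)-2)) + (4) * (y s) * (∑ i, x i)^2 * (1/(((n:ℝ)-1)*((n:ℝ)-2))) + (-4) * (y s) * ((n:ℝ)) * (∑ i, (x i)^2) * (1/(((n:ℝ)-1)*((n:ℝ)-2))) + (4) * (x s) * (∑ i, x i) * (∑ i, y i) * (1/((n:ℝ)-2))^2 + (-4) * (x s) * (y s) * (∑ i, x i) * (1/((n:ℝ)-2)) + (2) * (x s)^2 * (∑ i, y i) * (1/((n:ℝ)-2)) + (-2) * (x s)^2 * ((n:ℝ)) * (∑ i, y i) * (1/((n:ℝ)-2))^2 + (-2) * (x s)^2 * (y s) + (2) * (x s)^2 * (y s) * ((n:ℝ)) * (1/((n:ℝ)-2)))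
      ((-2) * (∑ i, (y i)^2) * (1/((n:ℝ)-2)) + (-2) * (∑ i, y i)^2 * (1/(((n:ℝ)-1)*((n:ℝ)-2))) + (2) * ((n:ℝ)) * (∑ i, (y i)^2) * (1/(((n:ℝ)-1)*((n:ℝ)-2))) + (2) * ((n:ℝ)) * (∑ i, (y i)^2) * (1/((n:ℝ)-2))^2 + (2) * ((n:ℝ)) * (∑ i, y i)^2 * (1/((n:ℝ)-2)) * (1/(((n:ℝ)-1)*((n:ℝ)-2))) + (-2) * ((n:ℝ))^2 * (∑ i, (y i)^2) * (1/((n:ℝ)-2)) * (1/(((n:ℝ)-1)*((n:ℝ)-2))) + (2) * (y s) * (∑ i, y i) * (1/((n:ℝ)-2)) + (-2) * (y s) * ((n:ℝ)) * (∑ i, y i) * (1/((n:ℝ)-2))^2 + (1) * (y s)^2 + (-2) * (y s)^2 * ((n:ℝ)) * (1/((n:ℝ)-2)) + (1) * (y s)^2 * ((n:ℝ))^2 * (1/((n:ℝ)-2))^2)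
      ((-2) * (∑ i, (x i)^2) * (1/((n:ℝ)-2)) + (-2) * (∑ i, x i)^2 * (1/(((n:ℝ)-1)*((n:ℝ)-2))) + (2) * ((n:ℝ)) * (∑ i, (x i)^2) * (1/(((n:ℝ)-1)*((n:ℝ)-2))) + (2) * ((n:ℝ)) * (∑ i, (x i)^2) * (1/((n:ℝ)-2))^2 + (2) * ((n:ℝ)) * (∑ i, x i)^2 * (1/((n:ℝ)-2)) * (1/(((n:ℝ)-1)*((n:ℝ)-2))) + (-2) * ((n:ℝ))^2 * (∑ i, (x i)^2) * (1/((n:ℝ)-2)) * (1/(((n:ℝ)-1)*((n:ℝ)-2))) + (2) * (x s) * (∑ i, x i) * (1/((n:ℝ)-2)) + (-2) * (x s) * ((n:ℝ)) * (∑ i, x i) * (1/((n:ℝ)-2))^2 + (1) * (x s)^2 + (-2) * (x s)^2 * ((n:ℝ)) * (1/((n:ℝ)-2)) + (1) * (x s)^2 * ((n:ℝ))^2 * (1/((n:ℝ)-2))^2)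
      ((4) * (∑ i, x i) * (∑ i, y i) * (1/((n:ℝ)-2))^2 + (-4) * (y s) * (∑ i, x i) * (1/((n:ℝ)-2)) + (-4) * (x s) * (∑ i, y i) * (1/((n:ℝ)-2)) + (4) * (x s) * (y s))
      ((2) * (∑ i, y i) * (1/((n:ℝ)-2)) + (-2) * ((n:ℝ)) * (∑ i, y i) * (1/((n:ℝ)-2))^2 + (-2) * (y s) + (2) * (y s) * ((n:ℝ)) * (1/((n:ℝ)-2)))
      ((2) * (∑ i, x i) * (1/((n:ℝ)-2)) + (-2) * ((n:ℝ)) * (∑ i, x i) * (1/((n:ℝ)-2))^2 + (-2) * (x s) + (2) * (x s) * ((n:ℝ)) * (1/((n:ℝ)-2)))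
      ((1) + (-2) * ((n:ℝ)) * (1/((n:ℝ)-2)) + (1) * ((n:ℝ))^2 * (1/((n:ℝ)-2))^2)
            (fun t => by ring))
      _ = _ := (dc_expand_sum x y _
            ((1) * (∑ i, (x i)^2 * (y i)^2) + (-4) * (∑ i, (x i)^2) * (∑ i, (y i)^2) * (1/((n:ℝ)-2)) + (2) * (∑ i, y i) * (∑ i, (x i)^2 * y i) * (1/((n:ℝ)-2)) + (-2) * (∑ i, y i)^2 * (∑ i, (x i)^2) * (1/(((n:ℝ)-1)*((n:ℝ)-2))) + (-4) * (∑ i, y i)^2 * (∑ i, (x i)^2) * (1/((n:ℝ)-2))^2 + (2) * (∑ i, x i) * (∑ i, x i * (y i)^2) * (1/((n:ℝ)-2)) + (4) * (∑ i, x i) * (∑ i, y i) * (∑ i, x i * y i) * (1/((n:ℝ)-2))^2 + (-2) * (∑ i, x i)^2 * (∑ i, (y i)^2) * (1/(((n:ℝ)-1)*((n:ℝ)-2))) + (-4) * (∑ i, x i)^2 * (∑ i, (y i)^2) * (1/((n:ℝ)-2))^2 + (-8) * (∑ i, x i)^2 * (∑ i, y i)^2 * (1/((n:ℝ)-2)) *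 (1/(((n:ℝ)-1)*((n:ℝ)-2))) + (-2) * ((n:ℝ)) * (∑ i, (x i)^2 * (y i)^2) * (1/((n:ℝ)-2)) + (4) * ((n:ℝ)) * (∑ i, (x i)^2) * (∑ i, (y i)^2) * (1/(((n:ℝ)-1)*((n:ℝ)-2))) + (8) * ((n:ℝ)) * (∑ i, (x i)^2) * (∑ i, (y i)^2) * (1/((n:ℝ)-2))^2 + (-2) * ((n:ℝ)) * (∑ i, y i) * (∑ i, (x i)^2 * y i) * (1/((n:ℝ)-2))^2 + (10) * ((n:ℝ)) * (∑ i, y i)^2 * (∑ i, (x i)^2) * (1/((n:ℝ)-2)) * (1/(((n:ℝ)-1)*((n:ℝ)-2))) + (-2) * ((n:ℝ)) * (∑ i, x i) * (∑ i, x i * (y i)^2) * (1/((n:ℝ)-2))^2 + (10) * ((n:ℝ)) * (∑ i, x i)^2 * (∑ i, (y i)^2) * (1/((n:ℝ)-2)) * (1/(((n:ℝ)-1)*((n:ℝ)-2))) + (4) * ((n:ℝ)) * (∑ i, x i)^2 * (∑ i, y i)^2 * (1/(((n:ℝ)-1)*((n:ℝ)-2)))^2 + (1) * ((n:ℝ))^2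 * (∑ i, (x i)^2 * (y i)^2) * (1/((n:ℝ)-2))^2 + (-12) * ((n:ℝ))^2 * (∑ i, (x i)^2) * (∑ i, (y i)^2) * (1/((n:ℝ)-2)) * (1/(((n:ℝ)-1)*((n:ℝ)-2))) + (-4) * ((n:ℝ))^2 * (∑ i, y i)^2 * (∑ i, (x i)^2) * (1/(((n:ℝ)-1)*((n:ℝ)-2)))^2 + (-4) * ((n:ℝ))^2 * (∑ i, x i)^2 * (∑ i, (y i)^2) * (1/(((n:ℝ)-1)*((n:ℝ)-2)))^2 + (4) * ((n:ℝ))^3 * (∑ i, (x i)^2) * (∑ i, (y i)^2) * (1/(((n:ℝ)-1)*((n:ℝ)-2)))^2)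
      ((-2) * (∑ i, x i * (y i)^2) + (-4) * (∑ i, y i) * (∑ i, x i * y i) * (1/((n:ℝ)-2)) + (6) * (∑ i, x i) * (∑ i, (y i)^2) * (1/((n:ℝ)-2)) + (4) * (∑ i, x i) * (∑ i, y i)^2 * (1/(((n:ℝ)-1)*((n:ℝ)-2))) + (4) * (∑ i, x i) * (∑ i, y i)^2 * (1/((n:ℝ)-2))^2 + (2) * ((n:ℝ)) * (∑ i, x i * (y i)^2) * (1/((n:ℝ)-2)) + (-4) * ((n:ℝ)) * (∑ i, x i) * (∑ i, (y i)^2) * (1/(((n:ℝ)-1)*((n:ℝ)-2))) + (-6) * ((n:ℝ)) * (∑ i, x i) * (∑ i, (y i)^2) * (1/((n:ℝ)-2))^2 + (-4) * ((n:ℝ)) * (∑ i, x i) * (∑ i, y i)^2 * (1/((n:ℝ)-2)) * (1/(((n:ℝ)-1)*((n:ℝ)-2))) + (4) * ((n:ℝ))^2 * (∑ i, x i) * (∑ i, (y i)^2) * (1/((n:ℝ)-2)) * (1/(((n:ℝ)-1)*((n:ℝ)-2))))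
      ((-2) * (∑ i, (x i)^2 * y i) + (6) * (∑ i, y i) * (∑ i, (x i)^2) * (1/((n:ℝ)-2)) + (-4) * (∑ i, x i) * (∑ i, x i * y i) * (1/((n:ℝ)-2)) + (4) * (∑ i, x i)^2 * (∑ i, y i) * (1/(((n:ℝ)-1)*((n:ℝ)-2))) + (4) * (∑ i, x i)^2 * (∑ i, y i) * (1/((n:ℝ)-2))^2 + (2) * ((n:ℝ)) * (∑ i, (x i)^2 * y i) * (1/((n:ℝ)-2)) + (-4) * ((n:ℝ)) * (∑ i, y i) * (∑ i, (x i)^2) * (1/(((n:ℝ)-1)*((n:ℝ)-2))) + (-6) * ((n:ℝ)) * (∑ i, y i) * (∑ i, (x i)^2) * (1/((n:ℝ)-2))^2 + (-4) * ((n:ℝ)) * (∑ i, x i)^2 * (∑ i, y i) * (1/((n:ℝ)-2)) * (1/(((n:ℝ)-1)*((n:ℝ)-2))) + (4) * ((n:ℝ))^2 * (∑ i, y i) * (∑ i, (x i)^2) * (1/((n:ℝ)-2)) * (1/(((n:ℝ)-1)*((n:ℝ)-2))))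
      ((1) * (∑ i, (y i)^2) + (2) * (∑ i, y i)^2 * (1/((n:ℝ)-2)) + (-4) * ((n:ℝ)) * (∑ i, (y i)^2) * (1/((n:ℝ)-2)) + (-2) * ((n:ℝ)) * (∑ i, y i)^2 * (1/(((n:ℝ)-1)*((n:ℝ)-2))) + (-2) * ((n:ℝ)) * (∑ i, y i)^2 * (1/((n:ℝ)-2))^2 + (2) * ((n:ℝ))^2 * (∑ i, (y i)^2) * (1/(((n:ℝ)-1)*((n:ℝ)-2))) + (3) * ((n:ℝ))^2 * (∑ i, (y i)^2) * (1/((n:ℝ)-2))^2 + (2) * ((n:ℝ))^2 * (∑ i, y i)^2 * (1/((n:ℝ)-2)) * (1/(((n:ℝ)-1)*((n:ℝ)-2))) + (-2) * ((n:ℝ))^3 * (∑ i, (y i)^2) * (1/((n:ℝ)-2)) * (1/(((n:ℝ)-1)*((n:ℝ)-2))))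
      ((1) * (∑ i, (x i)^2) + (2) * (∑ i, x i)^2 * (1/((n:ℝ)-2)) + (-4) * ((n:ℝ)) * (∑ i, (x i)^2) * (1/((n:ℝ)-2)) + (-2) * ((n:ℝ)) * (∑ i, x i)^2 * (1/(((n:ℝ)-1)*((n:ℝ)-2))) + (-2) * ((n:ℝ)) * (∑ i, x i)^2 * (1/((n:ℝ)-2))^2 + (2) * ((n:ℝ))^2 * (∑ i, (x i)^2) * (1/(((n:ℝ)-1)*((n:ℝ)-2))) + (3) * ((n:ℝ))^2 * (∑ i, (x i)^2) * (1/((n:ℝ)-2))^2 + (2) * ((n:ℝ))^2 * (∑ i, x i)^2 * (1/((n:ℝ)-2)) * (1/(((n:ℝ)-1)*((n:ℝ)-2))) + (-2) * ((n:ℝ))^3 * (∑ i, (x i)^2) * (1/((n:ℝ)-2)) * (1/(((n:ℝ)-1)*((n:ℝ)-2))))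
      ((4) * (∑ i, x i * y i) + (-8) * (∑ i, x i) * (∑ i, y i) * (1/((n:ℝ)-2)) + (4) * ((n:ℝ)) * (∑ i, x i) * (∑ i, y i) * (1/((n:ℝ)-2))^2)
      ((-2) * (∑ i, y i) + (4) * ((n:ℝ)) * (∑ i, y i) * (1/((n:ℝ)-2)) + (-2) * ((n:ℝ))^2 * (∑ i, y i) * (1/((n:ℝ)-2))^2)
      ((-2) * (∑ i, x i) + (4) * ((n:ℝ)) * (∑ i, x i) * (1/((n:ℝ)-2)) + (-2) * ((n:ℝ))^2 * (∑ i, x i) * (1/((n:ℝ)-2))^2)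
      ((1) * ((n:ℝ)) + (-2) * ((n:ℝ))^2 * (1/((n:ℝ)-2)) + (1) * ((n:ℝ))^3 * (1/((n:ℝ)-2))^2)
            (fun s => by ring)).trans (by ring)
  have hDIAG : (∑ s, ((x s - x s)^2 - (((n:ℝ))*(x s)^2 - 2*(∑ i, x i)*(x s) + (∑ i, (x i)^2))/((n:ℝ)-2) - (((n:ℝ))*(x s)^2 - 2*(∑ i, x i)*(x s) + (∑ i, (x i)^2))/((n:ℝ)-2) + (2*((n:ℝ))*(∑ i, (x i)^2) - 2*(∑ i, x i)^2)/(((n:ℝ)-1)*((n:ℝ)-2))) * ((y s - y s)^2 - (((n:ℝ))*(y s)^2 - 2*(∑ i, y i)*(y s) + (∑ i, (y i)^2))/((n:ℝ)-2) - (((n:ℝ))*(y s)^2 - 2*(∑ i, y i)*(y s) + (∑ i, (y i)^2))/((n:ℝ)-2) + (2*((n:ℝ))*(∑ i, (y i)^2) - 2*(∑ i, y i)^2)/(((n:ℝ)-1)*((n:ℝ)-2)))) = ((-8) * (∑ i, y i)^2 * (∑ i, (x i)^2) * (1/((n:ℝ)-2))^2 + (16) * (∑ i, x i) * (∑ i,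 y i) * (∑ i, x i * y i) * (1/((n:ℝ)-2))^2 + (-8) * (∑ i, x i)^2 * (∑ i, (y i)^2) * (1/((n:ℝ)-2))^2 + (-16) * (∑ i, x i)^2 * (∑ i, y i)^2 * (1/((n:ℝ)-2)) * (1/(((n:ℝ)-1)*((n:ℝ)-2))) + (12) * ((n:ℝ)) * (∑ i, (x i)^2) * (∑ i, (y i)^2) * (1/((n:ℝ)-2))^2 + (-8) * ((n:ℝ)) * (∑ i, y i) * (∑ i, (x i)^2 * y i) * (1/((n:ℝ)-2))^2 + (16) * ((n:ℝ)) * (∑ i, y i)^2 * (∑ i, (x i)^2) * (1/((n:ℝ)-2)) * (1/(((n:ℝ)-1)*((n:ℝ)-2))) + (-8) * ((n:ℝ)) * (∑ i, x i) * (∑ i, x i * (y i)^2) * (1/((n:ℝ)-2))^2 + (16) * ((n:ℝ)) * (∑ i, x i)^2 * (∑ i, (y i)^2) * (1/((n:ℝ)-2)) * (1/(((n:ℝ)-1)*((n:ℝ)-2))) + (4) * ((n:ℝ)) * (∑ i, x i)^2 * (∑ i, y i)^2 * (1/(((n:ℝ)-1)*((n:ℝ)-2)))^2 + (4) * ((n:ℝ))^2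 * (∑ i, (x i)^2 * (y i)^2) * (1/((n:ℝ)-2))^2 + (-16) * ((n:ℝ))^2 * (∑ i, (x i)^2) * (∑ i, (y i)^2) * (1/((n:ℝ)-2)) * (1/(((n:ℝ)-1)*((n:ℝ)-2))) + (-4) * ((n:ℝ))^2 * (∑ i, y i)^2 * (∑ i, (x i)^2) * (1/(((n:ℝ)-1)*((n:ℝ)-2)))^2 + (-4) * ((n:ℝ))^2 * (∑ i, x i)^2 * (∑ i, (y i)^2) * (1/(((n:ℝ)-1)*((n:ℝ)-2)))^2 + (4) * ((n:ℝ))^3 * (∑ i, (x i)^2) * (∑ i, (y i)^2) * (1/(((n:ℝ)-1)*((n:ℝ)-2)))^2) :=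
    (dc_expand_sum x y _
      ((4) * (∑ i, (x i)^2) * (∑ i, (y i)^2) * (1/((n:ℝ)-2))^2 + (4) * (∑ i, y i)^2 * (∑ i, (x i)^2) * (1/((n:ℝ)-2)) * (1/(((n:ℝ)-1)*((n:ℝ)-2))) + (4) * (∑ i, x i)^2 * (∑ i, (y i)^2) * (1/((n:ℝ)-2)) * (1/(((n:ℝ)-1)*((n:ℝ)-2))) + (4) * (∑ i, x i)^2 * (∑ i, y i)^2 * (1/(((n:ℝ)-1)*((n:ℝ)-2)))^2 + (-8) * ((n:ℝ)) * (∑ i, (x i)^2) * (∑ i, (y i)^2) * (1/((n:ℝ)-2)) * (1/(((n:ℝ)-1)*((n:ℝ)-2))) + (-4) * ((n:ℝ)) * (∑ i, y i)^2 * (∑ i, (x i)^2) * (1/(((n:ℝ)-1)*((n:ℝ)-2)))^2 + (-4) * ((n:ℝ)) * (∑ i, x i)^2 * (∑ i, (y i)^2) * (1/(((n:ℝ)-1)*((n:ℝ)-2)))^2 + (4) * ((n:ℝ))^2 * (∑ i, (x i)^2) * (∑ i, (y i)^2) * (1/(((n:ℝ)-1)*((n:ℝ)-2)))^2)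
      ((-8) * (∑ i, x i) * (∑ i, (y i)^2) * (1/((n:ℝ)-2))^2 + (-8) * (∑ i, x i) * (∑ i, y i)^2 * (1/((n:ℝ)-2)) * (1/(((n:ℝ)-1)*((n:ℝ)-2))) + (8) * ((n:ℝ)) * (∑ i, x i) * (∑ i, (y i)^2) * (1/((n:ℝ)-2)) * (1/(((n:ℝ)-1)*((n:ℝ)-2))))
      ((-8) * (∑ i, y i) * (∑ i, (x i)^2) * (1/((n:ℝ)-2))^2 + (-8) * (∑ i, x i)^2 * (∑ i, y i) * (1/((n:ℝ)-2)) * (1/(((n:ℝ)-1)*((n:ℝ)-2))) + (8) * ((n:ℝ)) * (∑ i, y i) * (∑ i, (x i)^2) * (1/((n:ℝ)-2)) * (1/(((n:ℝ)-1)*((n:ℝ)-2))))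
      ((4) * ((n:ℝ)) * (∑ i, (y i)^2) * (1/((n:ℝ)-2))^2 + (4) * ((n:ℝ)) * (∑ i, y i)^2 * (1/((n:ℝ)-2)) * (1/(((n:ℝ)-1)*((n:ℝ)-2))) + (-4) * ((n:ℝ))^2 * (∑ i, (y i)^2) * (1/((n:ℝ)-2)) * (1/(((n:ℝ)-1)*((n:ℝ)-2))))
      ((4) * ((n:ℝ)) * (∑ i, (x i)^2) * (1/((n:ℝ)-2))^2 + (4) * ((n:ℝ)) * (∑ i, x i)^2 * (1/((n:ℝ)-2)) * (1/(((n:ℝ)-1)*((n:ℝ)-2))) + (-4) * ((n:ℝ))^2 * (∑ i, (x i)^2) * (1/((n:ℝ)-2)) * (1/(((n:ℝ)-1)*((n:ℝ)-2))))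
      ((16) * (∑ i, x i) * (∑ i, y i) * (1/((n:ℝ)-2))^2)
      ((-8) * ((n:ℝ)) * (∑ i, y i) * (1/((n:ℝ)-2))^2)
      ((-8) * ((n:ℝ)) * (∑ i, x i) * (1/((n:ℝ)-2))^2)
      ((4) * ((n:ℝ))^2 * (1/((n:ℝ)-2))^2)
      (fun s => by ring)).trans (by ring)
  have rowC : ∀ s : Fin n, (∑ b, (x s - x b)*(y s - y b))
      = ((n:ℝ))*(x s * y s) - (∑ i, y i)*(x s) - (∑ i, x i)*(y s) + (∑ i, x i * y i) := fun s =>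
    (dc_expand_sum x y _ (x s * y s) (-(y s)) (-(x s)) 0 0 1 0 0 0 (fun b => by ring)).trans (by ring)
  have totC : (∑ a, ∑ b, (x a - x b)*(y a - y b))
      = 2*((n:ℝ))*(∑ i, x i * y i) - 2*(∑ i, x i)*(∑ i, y i) := by
    rw [Finset.sum_congr rfl (fun a _ => rowC a)]
    exact (dc_expand_sum x y _ (∑ i, x i * y i) (-(∑ i, y i)) (-(∑ i, x i)) 0 0 ((n:ℝ)) 0 0 0
      (fun a => by ring)).trans (by ring)
  have e4 : (∑ s, ∑ t, ∑ u, ∑ v, if s ≠ t ∧ s ≠ u ∧ s ≠ v ∧ t ≠ u ∧ t ≠ v ∧ u ≠ v then ((x s - x t)*(y s - y t)) * ((x u - x v)*(y u - y v)) else 0) = ((8) * (∑ i, x i * y i)^2 + (4) * (∑ i, (x i)^2) * (∑ i, (y i)^2) + (-8) * (∑ i, y i) * (∑ i, (x i)^2 * y i) + (-4) * (∑ i, y i)^2 * (∑ i, (x i)^2) + (-8) * (∑ i, x i) * (∑ i, x i * (y i)^2) + (8) * (∑ i, x i) * (∑ i, y i) * (∑ i, x i * y i) + (-4) * (∑ i,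 x i)^2 * (∑ i, (y i)^2) + (4) * (∑ i, x i)^2 * (∑ i, y i)^2 + (4) * ((n:ℝ)) * (∑ i, (x i)^2 * (y i)^2) + (-12) * ((n:ℝ)) * (∑ i, x i * y i)^2 + (8) * ((n:ℝ)) * (∑ i, y i) * (∑ i, (x i)^2 * y i) + (8) * ((n:ℝ)) * (∑ i, x i) * (∑ i, x i * (y i)^2) + (-8) * ((n:ℝ)) * (∑ i, x i) * (∑ i, y i) * (∑ i, x i * y i) + (-4) * ((n:ℝ))^2 * (∑ i, (x i)^2 * (y i)^2) + (4) * ((n:ℝ))^2 * (∑ i, x i * y i)^2) := by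
    rw [dc_peel x y]
    calc (∑ s, ∑ t, ((x s - x t)*(y s - y t)) * ((∑ a, ∑ b, (x a - x b)*(y a - y b))
        - 2*(∑ b, (x s - x b)*(y s - y b)) - 2*(∑ b, (x t - x b)*(y t - y b))
        + 2*((x s - x t)*(y s - y t))))
        = ∑ s, (((-4) * (x s) * (y s) * (∑ i, x i * y i) + (-2) * (x s) * (y s) * (∑ i, x i) * (∑ i, y i) + (2) * (x s) * (y s) * ((n:ℝ)) * (∑ i, x i * y i) + (2) * (x s) * (y s)^2 * (∑ i, x i) + (2) * (x s)^2 * (y s) * (∑ i, y i) + (2) * (x s)^2 * (y s)^2 + (-2) * (x s)^2 * (y s)^2 * ((n:ℝ))) * ((n:ℝ)) + ((4) * (y s) * (∑ i, x i * y i) + (2) * (y s) * (∑ i, x i) * (∑ i, y i) + (-2) * (y s) * ((n:ℝ)) * (∑ i, x i * y i) + (-2) * (y s)^2 * (∑ i, x i) + (-4) * (x s) * (y s)^2 + (2) * (x s) * (y s)^2 * ((n:ℝ))) * (∑ i, x i) + ((4) * (x s) * (∑ i, x i * y i) + (2) * (x s) * (∑ i, x i) * (∑ i, y i) + (-2) *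 (x s) * ((n:ℝ)) * (∑ i, x i * y i) + (-2) * (x s)^2 * (∑ i, y i) + (-4) * (x s)^2 * (y s) + (2) * (x s)^2 * (y s) * ((n:ℝ))) * (∑ i, y i) + ((-2) * (y s) * (∑ i, y i) + (2) * (y s)^2) * (∑ i, (x i)^2) + ((-2) * (x s) * (∑ i, x i) + (2) * (x s)^2) * (∑ i, (y i)^2) + ((-4) * (∑ i, x i * y i) + (-2) * (∑ i, x i) * (∑ i, y i) + (2) * ((n:ℝ)) * (∑ i, x i * y i) + (8) * (x s) * (y s) + (-4) * (x s) * (y s) * ((n:ℝ))) * (∑ i, x i * y i) + ((2) * (∑ i, y i) + (-4) * (y s) + (2) * (y s) * ((n:ℝ))) * (∑ i, (x i)^2 * y i) + ((2) * (∑ i, x i) + (-4) * (x s) + (2) * (x s) * ((n:ℝ))) * (∑ i, x i * (y i)^2) + ((2) + (-2) * ((n:ℝ))) * (∑ i, (x i)^2 * (y i)^2)) :=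
          Finset.sum_congr rfl (fun s _ => dc_expand_sum x y _
            ((-4) * (x s) * (y s) * (∑ i, x i * y i) + (-2) * (x s) * (y s) * (∑ i, x i) * (∑ i, y i) + (2) * (x s) * (y s) * ((n:ℝ)) * (∑ i, x i * y i) + (2) * (x s) * (y s)^2 * (∑ i, x i) + (2) * (x s)^2 * (y s) * (∑ i, y i) + (2) * (x s)^2 * (y s)^2 + (-2) * (x s)^2 * (y s)^2 * ((n:ℝ)))
      ((4) * (y s) * (∑ i, x i * y i) + (2) * (y s) * (∑ i, x i) * (∑ i, y i) + (-2) * (y s) * ((n:ℝ)) * (∑ i, x i * y i) + (-2) * (y s)^2 * (∑ i, x i) + (-4) * (x s) * (y s)^2 + (2) * (x s) * (y s)^2 * ((n:ℝ)))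
      ((4) * (x s) * (∑ i, x i * y i) + (2) * (x s) * (∑ i, x i) * (∑ i, y i) + (-2) * (x s) * ((n:ℝ)) * (∑ i, x i * y i) + (-2) * (x s)^2 * (∑ i, y i) + (-4) * (x s)^2 * (y s) + (2) * (x s)^2 * (y s) * ((n:ℝ)))
      ((-2) * (y s) * (∑ i, y i) + (2) * (y s)^2)
      ((-2) * (x s) * (∑ i, x i) + (2) * (x s)^2)
      ((-4) * (∑ i, x i * y i) + (-2) * (∑ i, x i) * (∑ i, y i) + (2) * ((n:ℝ)) * (∑ i, x i * y i) + (8) * (x s) * (y s) + (-4) * (x s) * (y s) * ((n:ℝ)))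
      ((2) * (∑ i, y i) + (-4) * (y s) + (2) * (y s) * ((n:ℝ)))
      ((2) * (∑ i, x i) + (-4) * (x s) + (2) * (x s) * ((n:ℝ)))
      ((2) + (-2) * ((n:ℝ)))
            (fun t => by rw [totC, rowC s, rowC t]; ring))
      _ = _ := (dc_expand_sum x y _
            ((2) * (∑ i, (x i)^2 * (y i)^2) + (-4) * (∑ i, x i * y i)^2 + (2) * (∑ i, y i) * (∑ i, (x i)^2 * y i) + (2) * (∑ i, x i) * (∑ i, x i * (y i)^2) + (-2) * (∑ i, x i) * (∑ i, y i) * (∑ i, x i * y i) + (-2) * ((n:ℝ)) * (∑ i, (x i)^2 * (y i)^2) + (2) * ((n:ℝ)) * (∑ i, x i * y i)^2)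
      ((-4) * (∑ i, x i * (y i)^2) + (4) * (∑ i, y i) * (∑ i, x i * y i) + (-2) * (∑ i, x i) * (∑ i, (y i)^2) + (2) * (∑ i, x i) * (∑ i, y i)^2 + (2) * ((n:ℝ)) * (∑ i, x i * (y i)^2) + (-2) * ((n:ℝ)) * (∑ i, y i) * (∑ i, x i * y i))
      ((-4) * (∑ i, (x i)^2 * y i) + (-2) * (∑ i, y i) * (∑ i, (x i)^2) + (4) * (∑ i, x i) * (∑ i, x i * y i) + (2) * (∑ i, x i)^2 * (∑ i, y i) + (2) * ((n:ℝ)) * (∑ i, (x i)^2 * y i) + (-2) * ((n:ℝ)) * (∑ i, x i) * (∑ i, x i * y i))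
      ((2) * (∑ i, (y i)^2) + (-2) * (∑ i, y i)^2)
      ((2) * (∑ i, (x i)^2) + (-2) * (∑ i, x i)^2)
      ((8) * (∑ i, x i * y i) + (-8) * ((n:ℝ)) * (∑ i, x i * y i) + (-2) * ((n:ℝ)) * (∑ i, x i) * (∑ i, y i) + (2) * ((n:ℝ))^2 * (∑ i, x i * y i))
      ((-4) * (∑ i, y i) + (4) * ((n:ℝ)) * (∑ i, y i))
      ((-4) * (∑ i, x i) + (4) * ((n:ℝ)) * (∑ i, x i))
      ((2) * ((n:ℝ)) + (-2) * ((n:ℝ))^2)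
            (fun s => by ring)).trans (by ring)
  have e2 := dc_sym24 (fun s t u v => ((x s - x t)*(y s - y t)) * ((x u - x v)*(y u - y v)) + ((x s - x u)*(y s - y u)) * ((x t - x v)*(y t - y v)) + ((x s - x v)*(y s - y v)) * ((x t - x u)*(y t - y u)))
    (fun s t u v => by ring) (fun s t u v => by ring) (fun s t u v => by ring)
  have e1 : (∑ s, ∑ t, ∑ u, ∑ v, if s < t ∧ t < u ∧ u < v then hKernel x y s t u v else 0)
      = (1/12) * ∑ s, ∑ t, ∑ u, ∑ v, if s < t ∧ t < u ∧ u < v then ((x s - x t)*(y s - y t)) * ((x u - x v)*(y u - y v)) + ((x s - x u)*(y s - y u)) * ((x t - x v)*(y t - y v)) + ((x s - x v)*(y s - y v)) * ((x t - x u)*(y t - y u)) else 0 := by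
    have hpt1 : ∀ s t u v : Fin n, (if s < t ∧ t < u ∧ u < v then hKernel x y s t u v else 0)
        = (1/12) * (if s < t ∧ t < u ∧ u < v then ((x s - x t)*(y s - y t)) * ((x u - x v)*(y u - y v)) + ((x s - x u)*(y s - y u)) * ((x t - x v)*(y t - y v)) + ((x s - x v)*(y s - y v)) * ((x t - x u)*(y t - y u)) else 0) := by
      intro s t u v
      by_cases h : s < t ∧ t < u ∧ u < v
      · rw [if_pos h, if_pos h, dc_hkernel x y s t u v]
      · rw [if_neg h, if_neg h]; ring
    rw [dc_congr4 _ _ hpt1]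
    simp only [← Finset.mul_sum]
  have e3 : (∑ s, ∑ t, ∑ u, ∑ v, if s ≠ t ∧ s ≠ u ∧ s ≠ v ∧ t ≠ u ∧ t ≠ v ∧ u ≠ v then ((x s - x t)*(y s - y t)) * ((x u - x v)*(y u - y v)) + ((x s - x u)*(y s - y u)) * ((x t - x v)*(y t - y v)) + ((x s - x v)*(y s - y v)) * ((x t - x u)*(y t - y u)) else 0)
      = 3 * ∑ s, ∑ t, ∑ u, ∑ v, if s ≠ t ∧ s ≠ u ∧ s ≠ v ∧ t ≠ u ∧ t ≠ v ∧ u ≠ v then ((x s - x t)*(y s - y t)) * ((x u - x v)*(y u - y v)) else 0 := by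
    have hpt3 : ∀ s t u v : Fin n, (if s ≠ t ∧ s ≠ u ∧ s ≠ v ∧ t ≠ u ∧ t ≠ v ∧ u ≠ v then ((x s - x t)*(y s - y t)) * ((x u - x v)*(y u - y v)) + ((x s - x u)*(y s - y u)) * ((x t - x v)*(y t - y v)) + ((x s - x v)*(y s - y v)) * ((x t - x u)*(y t - y u)) else 0)
        = (if s ≠ t ∧ s ≠ u ∧ s ≠ v ∧ t ≠ u ∧ t ≠ v ∧ u ≠ v then ((x s - x t)*(y s - y t)) * ((x u - x v)*(y u - y v)) else 0)
          + ((if s ≠ t ∧ s ≠ u ∧ s ≠ v ∧ t ≠ u ∧ t ≠ v ∧ u ≠ v then ((x s - x u)*(y s - y u)) * ((x t - x v)*(y t - y v)) else 0) + (if s ≠ t ∧ s ≠ u ∧ s ≠ v ∧ t ≠ u ∧ t ≠ v ∧ u ≠ v then ((x s - x v)*(y s - y v)) * ((x t - x u)*(y t - y u)) else 0)) := by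
      intro s t u v
      split_ifs with h <;> ring
    rw [dc_congr4 _ _ hpt3]
    rw [dc_add4 (fun s t u v => if s ≠ t ∧ s ≠ u ∧ s ≠ v ∧ t ≠ u ∧ t ≠ v ∧ u ≠ v then ((x s - x t)*(y s - y t)) * ((x u - x v)*(y u - y v)) else 0)
      (fun s t u v => (if s ≠ t ∧ s ≠ u ∧ s ≠ v ∧ t ≠ u ∧ t ≠ v ∧ u ≠ v then ((x s - x u)*(y s - y u)) * ((x t - x v)*(y t - y v)) else 0) + (if s ≠ t ∧ s ≠ u ∧ s ≠ v ∧ t ≠ u ∧ t ≠ v ∧ u ≠ v then ((x s - x v)*(y s - y v)) * ((x t - x u)*(y t - y u)) else 0))]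
    rw [dc_add4 (fun s t u v => if s ≠ t ∧ s ≠ u ∧ s ≠ v ∧ t ≠ u ∧ t ≠ v ∧ u ≠ v then ((x s - x u)*(y s - y u)) * ((x t - x v)*(y t - y v)) else 0)
      (fun s t u v => if s ≠ t ∧ s ≠ u ∧ s ≠ v ∧ t ≠ u ∧ t ≠ v ∧ u ≠ v then ((x s - x v)*(y s - y v)) * ((x t - x u)*(y t - y u)) else 0)]
    have hT2 : (∑ s, ∑ t, ∑ u, ∑ v, if s ≠ t ∧ s ≠ u ∧ s ≠ v ∧ t ≠ u ∧ t ≠ v ∧ u ≠ v then ((x s - x u)*(y s - y u)) * ((x t - x v)*(y t - y v)) else 0)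
        = ∑ s, ∑ t, ∑ u, ∑ v, if s ≠ t ∧ s ≠ u ∧ s ≠ v ∧ t ≠ u ∧ t ≠ v ∧ u ≠ v then ((x s - x t)*(y s - y t)) * ((x u - x v)*(y u - y v)) else 0 := by
      rw [dc_swap23 (fun s t u v => if s ≠ t ∧ s ≠ u ∧ s ≠ v ∧ t ≠ u ∧ t ≠ v ∧ u ≠ v then ((x s - x u)*(y s - y u)) * ((x t - x v)*(y t - y v)) else 0)]
      exact dc_congr4 _ _ (fun s t u v => if_congr (by omega) rfl rfl)
    have hT3 : (∑ s, ∑ t, ∑ u, ∑ v, if s ≠ t ∧ s ≠ u ∧ s ≠ v ∧ t ≠ u ∧ t ≠ v ∧ u ≠ v then ((x s - x v)*(y s - y v)) * ((x t - x u)*(y t - y u)) else 0)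
        = ∑ s, ∑ t, ∑ u, ∑ v, if s ≠ t ∧ s ≠ u ∧ s ≠ v ∧ t ≠ u ∧ t ≠ v ∧ u ≠ v then ((x s - x t)*(y s - y t)) * ((x u - x v)*(y u - y v)) else 0 := by
      rw [dc_cycle2 (fun s t u v => if s ≠ t ∧ s ≠ u ∧ s ≠ v ∧ t ≠ u ∧ t ≠ v ∧ u ≠ v then ((x s - x v)*(y s - y v)) * ((x t - x u)*(y t - y u)) else 0)]
      exact dc_congr4 _ _ (fun s t u v => if_congr (by omega) rfl rfl)
    rw [hT2, hT3]; ring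
  have hRHStotal : (∑ s, ∑ t, ∑ u, ∑ v, if s < t ∧ t < u ∧ u < v then hKernel x y s t u v else 0)
      = (1/96) * (((8) * (∑ i, x i * y i)^2 + (4) * (∑ i, (x i)^2) * (∑ i, (y i)^2) + (-8) * (∑ i, y i) * (∑ i, (x i)^2 * y i) + (-4) * (∑ i, y i)^2 * (∑ i, (x i)^2) + (-8) * (∑ i, x i) * (∑ i, x i * (y i)^2) + (8) * (∑ i, x i) * (∑ i, y i) * (∑ i, x i * y i) + (-4) * (∑ i, x i)^2 * (∑ i, (y i)^2) + (4) * (∑ i, x i)^2 * (∑ i, y i)^2 + (4) * ((n:ℝ)) * (∑ i, (x i)^2 * (y i)^2) + (-12) * ((n:ℝ)) * (∑ i, x i * y i)^2 + (8) * ((n:ℝ)) * (∑ i, y i) * (∑ i, (x i)^2 * y i) + (8) * ((n:ℝ)) * (∑ i, x i) * (∑ i, x i * (y i)^2) + (-8) * ((n:ℝ)) * (∑ i, x i) * (∑ i, y i) * (∑ i, x i * y i) + (-4) * ((n:ℝ))^2 * (∑ i, (x i)^2 * (y i)^2) + (4) * ((n:ℝ))^2 * (∑ i, x i * y i)^2))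 := by
    rw [e1]
    have e5 : (∑ s, ∑ t, ∑ u, ∑ v, if s < t ∧ t < u ∧ u < v then ((x s - x t)*(y s - y t)) * ((x u - x v)*(y u - y v)) + ((x s - x u)*(y s - y u)) * ((x t - x v)*(y t - y v)) + ((x s - x v)*(y s - y v)) * ((x t - x u)*(y t - y u)) else 0)
        = (1/24) * ∑ s, ∑ t, ∑ u, ∑ v, if s ≠ t ∧ s ≠ u ∧ s ≠ v ∧ t ≠ u ∧ t ≠ v ∧ u ≠ v then ((x s - x t)*(y s - y t)) * ((x u - x v)*(y u - y v)) + ((x s - x u)*(y s - y u)) * ((x t - x v)*(y t - y v)) + ((x s - x v)*(y s - y v)) * ((x t - x u)*(y t - y u)) else 0 := by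
      rw [e2]; ring
    rw [e5, e3, e4]; ring
  simp only [covnSq]
  rw [dc_choose4 n hn, key, hLHS, hDIAG, hRHStotal]
  field_simp
  ring

set_option maxHeartbeats 2000000 in
theorem quarter_uInner_eq_sum_covnSq (n p q : ℕ) (hn : 4 ≤ n) (hp : 1 ≤ p) (hq : 1 ≤ q)
    (X : Fin n → EuclideanSpace ℝ (Fin p)) (Y : Fin n → EuclideanSpace ℝ (Fin q))
    (τX τY τ : ℝ) (hτX : 0 < τX) (hτY : 0 < τY) (hτ : τ = τX * τY)
    (LX : Matrix (Fin n) (Fin n) ℝ) (LY : Matrix (Fin n) (Fin n) ℝ)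
    (hLX : ∀ s t, LX s t = if s = t then 0 else (‖X s - X t‖ ^ 2 - τX ^ 2) / τX ^ 2)
    (hLY : ∀ s t, LY s t = if s = t then 0 else (‖Y s - Y t‖ ^ 2 - τY ^ 2) / τY ^ 2) :
    (1 / 4 : ℝ) * uInner LX LY =
      (1 / τ ^ 2) * ∑ i : Fin p, ∑ j : Fin q,
        covnSq (fun s => X s i) (fun s => Y s j) := by
  have hN : (4:ℝ) ≤ (n:ℝ) := by exact_mod_cast hn
  have h1 : ((n:ℝ)) - 1 ≠ 0 := by linarith
  have h2 : ((n:ℝ)) - 2 ≠ 0 := by linarith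
  have hτX2 : τX^2 ≠ 0 := pow_ne_zero 2 (ne_of_gt hτX)
  have hτY2 : τY^2 ≠ 0 := pow_ne_zero 2 (ne_of_gt hτY)
  -- squared norms as coordinate sums
  have hnX : ∀ a b : Fin n, ‖X a - X b‖^2 = ∑ i, (X a i - X b i)^2 := by
    intro a b
    rw [EuclideanSpace.norm_eq, Real.sq_sqrt (by positivity)]
    refine Finset.sum_congr rfl fun i _ => ?_
    simp [Real.norm_eq_abs, sq_abs]
  have hnY : ∀ a b : Fin n, ‖Y a - Y b‖^2 = ∑ j, (Y a j - Y b j)^2 := by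
    intro a b
    rw [EuclideanSpace.norm_eq, Real.sq_sqrt (by positivity)]
    refine Finset.sum_congr rfl fun j _ => ?_
    simp [Real.norm_eq_abs, sq_abs]
  -- uCenter decomposition for LX
  have hUX : ∀ s t : Fin n, s ≠ t → uCenter LX s t
      = (1/τX^2) * ∑ i, uCenter (Matrix.of fun a b => (X a i - X b i)^2) s t := by
    intro s t hst
    have rowL : ∀ s : Fin n, (∑ v, LX s v) = (∑ v, ‖X s - X v‖^2)/τX^2 - ((n:ℝ) - 1) := by
      intro s
      rw [Finset.sum_congr rfl (fun v _ => hLX s v)]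
      have hpt : ∀ v : Fin n, (if s = v then (0:ℝ) else (‖X s - X v‖^2 - τX^2)/τX^2)
          = ‖X s - X v‖^2/τX^2 - 1 + (if s = v then 1 else 0) := by
        intro v
        by_cases h : s = v
        · rw [if_pos h, if_pos h]; subst h; simp
        · rw [if_neg h, if_neg h]; field_simp; ring
      rw [Finset.sum_congr rfl (fun v _ => hpt v), Finset.sum_add_distrib,
        Finset.sum_sub_distrib, Finset.sum_ite_eq Finset.univ s (fun _ => (1:ℝ)),
        ← Finset.sum_div]
      simp [Finset.card_univ]
      try ring
    have colL : ∀ t : Fin n, (∑ u, LX u t) = (∑ u, ‖X u - X t‖^2)/τX^2 - ((n:ℝ) - 1) := by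
      intro t
      rw [Finset.sum_congr rfl (fun u _ => hLX u t)]
      have hpt : ∀ u : Fin n, (if u = t then (0:ℝ) else (‖X u - X t‖^2 - τX^2)/τX^2)
          = ‖X u - X t‖^2/τX^2 - 1 + (if u = t then 1 else 0) := by
        intro u
        by_cases h : u = t
        · rw [if_pos h, if_pos h]; subst h; simp
        · rw [if_neg h, if_neg h]; field_simp; ring
      rw [Finset.sum_congr rfl (fun u _ => hpt u), Finset.sum_add_distrib,
        Finset.sum_sub_distrib, Finset.sum_ite_eq' Finset.univ t (fun _ => (1:ℝ)),
        ← Finset.sum_div]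
      simp [Finset.card_univ]
      try ring
    have totL : (∑ u, ∑ v, LX u v) = (∑ u, ∑ v, ‖X u - X v‖^2)/τX^2 - (n:ℝ)*((n:ℝ) - 1) := by
      rw [Finset.sum_congr rfl (fun u _ => rowL u), Finset.sum_sub_distrib, ← Finset.sum_div]
      simp [Finset.card_univ]
      try ring
    have hOpen : ∀ i : Fin p, uCenter (Matrix.of fun a b => (X a i - X b i)^2) s t
        = (X s i - X t i)^2 - (∑ v, (X s i - X v i)^2)/((n:ℝ)-2)
          - (∑ u, (X u i - X t i)^2)/((n:ℝ)-2)
          + (∑ u, ∑ v, (X u i - X v i)^2)/(((n:ℝ)-1)*((n:ℝ)-2)) := by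
      intro i
      simp only [uCenter, Matrix.of_apply]
      rw [if_neg hst]
    rw [Finset.sum_congr rfl (fun i _ => hOpen i)]
    rw [Finset.sum_add_distrib, Finset.sum_sub_distrib, Finset.sum_sub_distrib,
      ← Finset.sum_div, ← Finset.sum_div, ← Finset.sum_div]
    have e1 : (∑ i, ∑ v, (X s i - X v i)^2) = ∑ v, ‖X s - X v‖^2 := by
      rw [Finset.sum_comm]
      exact Finset.sum_congr rfl fun v _ => (hnX s v).symm
    have e2 : (∑ i, ∑ u, (X u i - X t i)^2) = ∑ u, ‖X u - X t‖^2 := by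
      rw [Finset.sum_comm]
      exact Finset.sum_congr rfl fun u _ => (hnX u t).symm
    have e3 : (∑ i, ∑ u, ∑ v, (X u i - X v i)^2) = ∑ u, ∑ v, ‖X u - X v‖^2 := by
      rw [Finset.sum_comm]
      refine Finset.sum_congr rfl fun u _ => ?_
      rw [Finset.sum_comm]
      exact Finset.sum_congr rfl fun v _ => (hnX u v).symm
    rw [e1, e2, e3, ← hnX s t]
    simp only [uCenter]
    rw [if_neg hst, hLX s t, if_neg hst, rowL s, colL t, totL]
    field_simp
    ring
  have hUY : ∀ s t : Fin n, s ≠ t → uCenter LY s t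
      = (1/τY^2) * ∑ j, uCenter (Matrix.of fun a b => (Y a j - Y b j)^2) s t := by
    intro s t hst
    have rowL : ∀ s : Fin n, (∑ v, LY s v) = (∑ v, ‖Y s - Y v‖^2)/τY^2 - ((n:ℝ) - 1) := by
      intro s
      rw [Finset.sum_congr rfl (fun v _ => hLY s v)]
      have hpt : ∀ v : Fin n, (if s = v then (0:ℝ) else (‖Y s - Y v‖^2 - τY^2)/τY^2)
          = ‖Y s - Y v‖^2/τY^2 - 1 + (if s = v then 1 else 0) := by
        intro v
        by_cases h : s = v
        · rw [if_pos h, if_pos h]; subst h; simp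
        · rw [if_neg h, if_neg h]; field_simp; ring
      rw [Finset.sum_congr rfl (fun v _ => hpt v), Finset.sum_add_distrib,
        Finset.sum_sub_distrib, Finset.sum_ite_eq Finset.univ s (fun _ => (1:ℝ)),
        ← Finset.sum_div]
      simp [Finset.card_univ]
      try ring
    have colL : ∀ t : Fin n, (∑ u, LY u t) = (∑ u, ‖Y u - Y t‖^2)/τY^2 - ((n:ℝ) - 1) := by
      intro t
      rw [Finset.sum_congr rfl (fun u _ => hLY u t)]
      have hpt : ∀ u : Fin n, (if u = t then (0:ℝ) else (‖Y u - Y t‖^2 - τY^2)/τY^2)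
          = ‖Y u - Y t‖^2/τY^2 - 1 + (if u = t then 1 else 0) := by
        intro u
        by_cases h : u = t
        · rw [if_pos h, if_pos h]; subst h; simp
        · rw [if_neg h, if_neg h]; field_simp; ring
      rw [Finset.sum_congr rfl (fun u _ => hpt u), Finset.sum_add_distrib,
        Finset.sum_sub_distrib, Finset.sum_ite_eq' Finset.univ t (fun _ => (1:ℝ)),
        ← Finset.sum_div]
      simp [Finset.card_univ]
      try ring
    have totL : (∑ u, ∑ v, LY u v) = (∑ u, ∑ v, ‖Y u - Y v‖^2)/τY^2 - (n:ℝ)*((n:ℝ) - 1) := by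
      rw [Finset.sum_congr rfl (fun u _ => rowL u), Finset.sum_sub_distrib, ← Finset.sum_div]
      simp [Finset.card_univ]
      try ring
    have hOpen : ∀ j : Fin q, uCenter (Matrix.of fun a b => (Y a j - Y b j)^2) s t
        = (Y s j - Y t j)^2 - (∑ v, (Y s j - Y v j)^2)/((n:ℝ)-2)
          - (∑ u, (Y u j - Y t j)^2)/((n:ℝ)-2)
          + (∑ u, ∑ v, (Y u j - Y v j)^2)/(((n:ℝ)-1)*((n:ℝ)-2)) := by
      intro j
      simp only [uCenter, Matrix.of_apply]
      rw [if_neg hst]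
    rw [Finset.sum_congr rfl (fun j _ => hOpen j)]
    rw [Finset.sum_add_distrib, Finset.sum_sub_distrib, Finset.sum_sub_distrib,
      ← Finset.sum_div, ← Finset.sum_div, ← Finset.sum_div]
    have e1 : (∑ j, ∑ v, (Y s j - Y v j)^2) = ∑ v, ‖Y s - Y v‖^2 := by
      rw [Finset.sum_comm]
      exact Finset.sum_congr rfl fun v _ => (hnY s v).symm
    have e2 : (∑ j, ∑ u, (Y u j - Y t j)^2) = ∑ u, ‖Y u - Y t‖^2 := by
      rw [Finset.sum_comm]
      exact Finset.sum_congr rfl fun u _ => (hnY u t).symm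
    have e3 : (∑ j, ∑ u, ∑ v, (Y u j - Y v j)^2) = ∑ u, ∑ v, ‖Y u - Y v‖^2 := by
      rw [Finset.sum_comm]
      refine Finset.sum_congr rfl fun u _ => ?_
      rw [Finset.sum_comm]
      exact Finset.sum_congr rfl fun v _ => (hnY u v).symm
    rw [e1, e2, e3, ← hnY s t]
    simp only [uCenter]
    rw [if_neg hst, hLY s t, if_neg hst, rowL s, colL t, totL]
    field_simp
    ring
  -- expand the inner product coordinatewise
  have hpt : ∀ s t : Fin n, (if s ≠ t then uCenter LX s t * uCenter LY s t else 0)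
      = ∑ i : Fin p, ∑ j : Fin q, (1/(τX^2*τY^2)) *
          (if s ≠ t then uCenter (Matrix.of fun a b => (X a i - X b i)^2) s t *
            uCenter (Matrix.of fun a b => (Y a j - Y b j)^2) s t else 0) := by
    intro s t
    by_cases h : s = t
    · rw [if_neg (fun hc => hc h)]
      symm
      refine Finset.sum_eq_zero fun i _ => Finset.sum_eq_zero fun j _ => ?_
      rw [if_neg (fun hc => hc h)]
      ring
    · rw [if_pos h, hUX s t h, hUY s t h]
      have expand : ((1/τX^2) * ∑ i, uCenter (Matrix.of fun a b => (X a i - X b i)^2) s t)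
          * ((1/τY^2) * ∑ j, uCenter (Matrix.of fun a b => (Y a j - Y b j)^2) s t)
          = (1/(τX^2*τY^2)) *
            ((∑ i, uCenter (Matrix.of fun a b => (X a i - X b i)^2) s t)
              * (∑ j, uCenter (Matrix.of fun a b => (Y a j - Y b j)^2) s t)) := by ring
      rw [expand, Finset.sum_mul_sum, Finset.mul_sum]
      refine Finset.sum_congr rfl fun i _ => ?_
      rw [Finset.mul_sum]
      refine Finset.sum_congr rfl fun j _ => ?_
      rw [if_pos h]
  simp only [uInner]
  rw [Finset.sum_congr rfl (fun s _ => Finset.sum_congr rfl fun t _ => hpt s t)]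
  rw [dc_pairswap (fun s t i j => (1/(τX^2*τY^2)) *
      (if s ≠ t then uCenter (Matrix.of fun a b => (X a i - X b i)^2) s t *
        uCenter (Matrix.of fun a b => (Y a j - Y b j)^2) s t else 0))]
  have hcov : ∀ (i : Fin p) (j : Fin q), covnSq (fun s => X s i) (fun s => Y s j)
      = (1/4 : ℝ) * ((∑ s, ∑ t, if s ≠ t then
          uCenter (Matrix.of fun a b => (X a i - X b i)^2) s t *
          uCenter (Matrix.of fun a b => (Y a j - Y b j)^2) s t else 0)
        / ((n : ℝ) * ((n : ℝ) - 3))) := fun i j => (dc_core n hn _ _).symm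
  rw [Finset.sum_congr rfl (fun i _ => Finset.sum_congr rfl fun j _ => hcov i j)]
  have fold : ∀ (i : Fin p), (∑ j : Fin q, ∑ s, ∑ t, (1/(τX^2*τY^2)) *
      (if s ≠ t then uCenter (Matrix.of fun a b => (X a i - X b i)^2) s t *
        uCenter (Matrix.of fun a b => (Y a j - Y b j)^2) s t else 0))
      = ∑ j : Fin q, (1/(τX^2*τY^2)) * (∑ s, ∑ t,
        (if s ≠ t then uCenter (Matrix.of fun a b => (X a i - X b i)^2) s t *
          uCenter (Matrix.of fun a b => (Y a j - Y b j)^2) s t else 0)) := by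
    intro i
    refine Finset.sum_congr rfl fun j _ => ?_
    rw [Finset.mul_sum]
    exact Finset.sum_congr rfl fun s _ => (Finset.mul_sum ..).symm
  rw [Finset.sum_congr rfl (fun i _ => fold i)]
  rw [hτ]
  rw [Finset.sum_div, Finset.mul_sum, Finset.mul_sum]
  refine Finset.sum_congr rfl fun i _ => ?_
  rw [Finset.sum_div, Finset.mul_sum, Finset.mul_sum]
  refine Finset.sum_congr rfl fun j _ => ?_
  field_simp
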